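/- arXiv:1705.03519 — 6 statements merged into one kernel-verified Lean document; each statement's English description precedes it below -/
import Mathlib

section
/- Let N ≥ 1, χ > 0, k ∈ (−N, 0), m > 1, M > 0 and R > 0. Define ρ_*(x) := (M N / (σ_N R^N)) · 1_{B_R}(x), where B_R is the ball of radius R centered at the origin and σ_N = 2π^{N/2}/Γ(N/2) is the surface area of the unit sphere in ℝ^N. Then ℱ[ρ_*] ≤ (M^m N^{m−1} σ_N^{1−m} / (m−1)) · R^{N(1−m)} + 2^{k−1} M² χ · R^k / k. In particular, if m > m_c := 1 − k/N then, choosing R large enough, ℱ[ρ_*] < 0. -/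
open MeasureTheory Metric Set

noncomputable section

/-- The free energy functional `ℱ[ρ] = 1/(m-1) ∫ ρ^m + χ/(2k) ∬ |x-y|^k ρ(x) ρ(y)`. -/
def freeEnergy (N : ℕ) (m χ k : ℝ) (ρ : EuclideanSpace ℝ (Fin N) → ℝ) : ℝ :=
  (1 / (m - 1)) * (∫ x, ρ x ^ m) +
    (χ / (2 * k)) * (∫ x, ∫ y, ‖x - y‖ ^ k * ρ x * ρ y)

/-- The surface area `σ_N = 2 π^{N/2} / Γ(N/2)` of the unit sphere in `ℝ^N`. -/
def sphereArea (N : ℕ) : ℝ := 2 * Real.pi ^ ((N : ℝ) / 2) / Real.Gamma ((N : ℝ) / 2)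

/-- The normalised characteristic function of the ball of radius `R` with mass `M`. -/
def rhoStar (N : ℕ) (M R : ℝ) : EuclideanSpace ℝ (Fin N) → ℝ := fun x =>
  (Metric.closedBall (0 : EuclideanSpace ℝ (Fin N)) R).indicator
    (fun _ => M * N / (sphereArea N * R ^ (N : ℝ))) x

lemma aux_exp_lt {N : ℕ} {k : ℝ} (hN : 1 ≤ N) (hk₁ : -(N : ℝ) < k) (hk₂ : k < 0) :
    k⁻¹ * N < -1 := by
  have hN0 : (0 : ℝ) < N := by exact_mod_cast hN
  have h : (N : ℝ) / k < -1 := by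
    rw [div_lt_iff_of_neg hk₂]; linarith
  calc k⁻¹ * N = (N : ℝ) / k := by ring
  _ < -1 := h

lemma integrableOn_norm_rpow (N : ℕ) (hN : 1 ≤ N) {k : ℝ} (hk₁ : -(N : ℝ) < k) (hk₂ : k < 0)
    (R : ℝ) :
    IntegrableOn (fun x : EuclideanSpace ℝ (Fin N) => ‖x‖ ^ k) (closedBall 0 R) := by
  have hkne : k ≠ 0 := hk₂.ne
  have hmeas : Measurable fun x : EuclideanSpace ℝ (Fin N) => ‖x‖ ^ k :=
    measurable_norm.pow measurable_const
  constructor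
  · exact (hmeas.stronglyMeasurable).aestronglyMeasurable
  · rw [hasFiniteIntegral_iff_ofReal]
    · set μ := (volume : Measure (EuclideanSpace ℝ (Fin N))).restrict (closedBall 0 R) with hμ
      rw [lintegral_eq_lintegral_meas_le μ
        (Filter.Eventually.of_forall fun x => Real.rpow_nonneg (norm_nonneg x) k)
        hmeas.aemeasurable]
      have key : ∀ t ∈ Ioi (0:ℝ),
          {a : EuclideanSpace ℝ (Fin N) | t ≤ ‖a‖ ^ k} ⊆ closedBall 0 (t ^ k⁻¹) := by
        intro t ht a ha
        simp only [mem_setOf_eq] at ha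
        rcases eq_or_ne a 0 with rfl | h0
        · rw [norm_zero, Real.zero_rpow hkne] at ha
          exact absurd (lt_of_lt_of_le ht ha) (lt_irrefl 0)
        · rw [mem_closedBall_zero_iff]
          exact (Real.le_rpow_inv_iff_of_neg (norm_pos_iff.mpr h0) ht hk₂).mpr ha
      calc ∫⁻ t in Ioi (0:ℝ), μ {a | t ≤ ‖a‖ ^ k}
          ≤ ∫⁻ t in Ioc (0:ℝ) 1 ∪ Ioi 1, μ {a | t ≤ ‖a‖ ^ k} :=
            lintegral_mono_set Ioi_subset_Ioc_union_Ioi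
        _ ≤ (∫⁻ t in Ioc (0:ℝ) 1, μ {a | t ≤ ‖a‖ ^ k}) +
            ∫⁻ t in Ioi (1:ℝ), μ {a | t ≤ ‖a‖ ^ k} := lintegral_union_le _ _ _
        _ < ⊤ := by
            refine ENNReal.add_lt_top.2 ⟨?_, ?_⟩
            · have hb : ∀ t, μ {a : EuclideanSpace ℝ (Fin N) | t ≤ ‖a‖ ^ k} ≤
                  volume (closedBall (0 : EuclideanSpace ℝ (Fin N)) R) := by
                intro t
                rw [hμ, Measure.restrict_apply' measurableSet_closedBall]
                exact measure_mono inter_subset_right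
              calc (∫⁻ t in Ioc (0:ℝ) 1, μ {a | t ≤ ‖a‖ ^ k})
                  ≤ ∫⁻ _ in Ioc (0:ℝ) 1, volume (closedBall (0 : EuclideanSpace ℝ (Fin N)) R) :=
                    lintegral_mono fun t => hb t
                _ = volume (closedBall (0 : EuclideanSpace ℝ (Fin N)) R) * volume (Ioc (0:ℝ) 1) :=
                    by rw [setLIntegral_const]
                _ < ⊤ := ENNReal.mul_lt_top measure_closedBall_lt_top (by simp)
            · have hb : ∀ t ∈ Ioi (1:ℝ), μ {a : EuclideanSpace ℝ (Fin N) | t ≤ ‖a‖ ^ k} ≤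
                  ENNReal.ofReal (t ^ (k⁻¹ * (N:ℝ))) *
                    volume (ball (0 : EuclideanSpace ℝ (Fin N)) 1) := by
                intro t ht
                have ht0 : (0:ℝ) < t := lt_trans one_pos ht
                have h1 : μ {a : EuclideanSpace ℝ (Fin N) | t ≤ ‖a‖ ^ k} ≤
                    volume (closedBall (0 : EuclideanSpace ℝ (Fin N)) (t ^ k⁻¹)) := by
                  rw [hμ, Measure.restrict_apply' measurableSet_closedBall]
                  exact measure_mono (inter_subset_left.trans (key t ht0))
                refine h1.trans_eq ?_
                rw [Measure.addHaar_closedBall _ _ (Real.rpow_nonneg ht0.le _),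
                  finrank_euclideanSpace_fin, ← Real.rpow_natCast (t ^ k⁻¹) N,
                  ← Real.rpow_mul ht0.le]
              calc (∫⁻ t in Ioi (1:ℝ), μ {a | t ≤ ‖a‖ ^ k})
                  ≤ ∫⁻ t in Ioi (1:ℝ), ENNReal.ofReal (t ^ (k⁻¹ * (N:ℝ))) *
                      volume (ball (0 : EuclideanSpace ℝ (Fin N)) 1) := by
                    refine setLIntegral_mono' measurableSet_Ioi hb
                _ = (∫⁻ t in Ioi (1:ℝ), ENNReal.ofReal (t ^ (k⁻¹ * (N:ℝ)))) *
                      volume (ball (0 : EuclideanSpace ℝ (Fin N)) 1) :=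
                    lintegral_mul_const' _ _ measure_ball_lt_top.ne
                _ < ⊤ := ENNReal.mul_lt_top
                    ((integrableOn_Ioi_rpow_of_lt (aux_exp_lt hN hk₁ hk₂) one_pos).setLIntegral_lt_top)
                    measure_ball_lt_top
    · exact Filter.Eventually.of_forall fun x => Real.rpow_nonneg (norm_nonneg x) k

lemma integrableOn_norm_sub_rpow (N : ℕ) (hN : 1 ≤ N) {k : ℝ} (hk₁ : -(N : ℝ) < k)
    (hk₂ : k < 0) (x : EuclideanSpace ℝ (Fin N)) (R r : ℝ) (hr : ‖x‖ + R ≤ r) :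
    IntegrableOn (fun y : EuclideanSpace ℝ (Fin N) => ‖x - y‖ ^ k) (closedBall 0 R) := by
  have hmp := Measure.measurePreserving_sub_left (volume : Measure (EuclideanSpace ℝ (Fin N))) x
  have hemb := (MeasurableEquiv.subLeft x).measurableEmbedding
  have h1 : IntegrableOn ((fun z : EuclideanSpace ℝ (Fin N) => ‖z‖ ^ k) ∘ fun y => x - y)
      ((fun y : EuclideanSpace ℝ (Fin N) => x - y) ⁻¹' closedBall 0 r) := by
    exact (hmp.integrableOn_comp_preimage hemb).mpr (integrableOn_norm_rpow N hN hk₁ hk₂ r)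
  refine h1.mono_set ?_
  intro y hy
  simp only [mem_preimage, mem_closedBall_zero_iff] at *
  calc ‖x - y‖ ≤ ‖x‖ + ‖y‖ := norm_sub_le _ _
  _ ≤ ‖x‖ + R := by linarith [hy]
  _ ≤ r := hr

lemma setIntegral_norm_sub_rpow_eq (N : ℕ) {k : ℝ} (x : EuclideanSpace ℝ (Fin N)) (r : ℝ) :
    ∫ y in (fun y : EuclideanSpace ℝ (Fin N) => x - y) ⁻¹' closedBall 0 r, ‖x - y‖ ^ k =
      ∫ z in closedBall (0 : EuclideanSpace ℝ (Fin N)) r, ‖z‖ ^ k := by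
  have hmp := Measure.measurePreserving_sub_left (volume : Measure (EuclideanSpace ℝ (Fin N))) x
  have hemb := (MeasurableEquiv.subLeft x).measurableEmbedding
  exact hmp.setIntegral_preimage_emb hemb (fun z => ‖z‖ ^ k) _

lemma Gamma_half_pos {N : ℕ} (hN : 1 ≤ N) : 0 < Real.Gamma ((N : ℝ) / 2) := by
  apply Real.Gamma_pos_of_pos
  have : (1:ℝ) ≤ N := by exact_mod_cast hN
  linarith

lemma sphereArea_pos {N : ℕ} (hN : 1 ≤ N) : 0 < sphereArea N := by
  unfold sphereArea
  have := Gamma_half_pos hN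
  have := Real.pi_pos
  positivity

lemma volume_closedBall_toReal (N : ℕ) (hN : 1 ≤ N) {R : ℝ} (hR : 0 < R) :
    (volume (closedBall (0 : EuclideanSpace ℝ (Fin N)) R)).toReal =
      sphereArea N * R ^ (N : ℝ) / N := by
  have hN0 : (0:ℝ) < N := by exact_mod_cast hN
  have hΓ := Gamma_half_pos hN
  haveI : Nonempty (Fin N) := ⟨⟨0, hN⟩⟩
  rw [EuclideanSpace.volume_closedBall, ENNReal.toReal_mul, ENNReal.toReal_pow,
    ENNReal.toReal_ofReal hR.le, ENNReal.toReal_ofReal (by positivity)]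
  simp only [Fintype.card_fin]
  have h1 : Real.sqrt Real.pi ^ N = Real.pi ^ ((N : ℝ) / 2) := by
    rw [Real.sqrt_eq_rpow, ← Real.rpow_natCast (Real.pi ^ ((1:ℝ)/2)) N,
      ← Real.rpow_mul Real.pi_pos.le]
    norm_num
    ring_nf
  have h2 : Real.Gamma ((N : ℝ) / 2 + 1) = ((N : ℝ) / 2) * Real.Gamma ((N : ℝ) / 2) := by
    rw [Real.Gamma_add_one (by positivity)]
  rw [h1, h2, Real.rpow_natCast, sphereArea]
  field_simp

lemma g_meas (N : ℕ) (k R : ℝ) :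
    Measurable fun x : EuclideanSpace ℝ (Fin N) =>
      ∫ y in closedBall (0 : EuclideanSpace ℝ (Fin N)) R, ‖x - y‖ ^ k := by
  have hsm : StronglyMeasurable fun p : EuclideanSpace ℝ (Fin N) × EuclideanSpace ℝ (Fin N) =>
      Set.indicator (univ ×ˢ closedBall (0 : EuclideanSpace ℝ (Fin N)) R)
        (fun p : EuclideanSpace ℝ (Fin N) × EuclideanSpace ℝ (Fin N) => ‖p.1 - p.2‖ ^ k) p :=
    (((measurable_fst.sub measurable_snd).norm.pow measurable_const).indicator
      (MeasurableSet.univ.prod measurableSet_closedBall)).stronglyMeasurable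
  have h := hsm.integral_prod_right' (ν := volume)
  have heq : (fun x : EuclideanSpace ℝ (Fin N) =>
      ∫ y in closedBall (0 : EuclideanSpace ℝ (Fin N)) R, ‖x - y‖ ^ k) =
      fun x => ∫ y, Set.indicator (univ ×ˢ closedBall (0 : EuclideanSpace ℝ (Fin N)) R)
        (fun p : EuclideanSpace ℝ (Fin N) × EuclideanSpace ℝ (Fin N) => ‖p.1 - p.2‖ ^ k)
        (x, y) := by
    funext x
    rw [← integral_indicator measurableSet_closedBall]
    congr 1
    funext y
    classical
    rw [Set.indicator_apply, Set.indicator_apply]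
    simp [Set.mem_prod]
  rw [heq]
  exact h.measurable

lemma volume_singleton (N : ℕ) (hN : 1 ≤ N) (x : EuclideanSpace ℝ (Fin N)) :
    volume ({x} : Set (EuclideanSpace ℝ (Fin N))) = 0 := by
  have h : ({x} : Set (EuclideanSpace ℝ (Fin N))) = closedBall x 0 := by
    simp
  rw [h, Measure.addHaar_closedBall _ _ le_rfl, finrank_euclideanSpace_fin]
  rw [zero_pow (by omega : N ≠ 0)]
  simp

lemma g_lower (N : ℕ) (hN : 1 ≤ N) {k : ℝ} (hk₁ : -(N : ℝ) < k) (hk₂ : k < 0) {R : ℝ}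
    (hR : 0 < R) {x : EuclideanSpace ℝ (Fin N)}
    (hx : x ∈ closedBall (0 : EuclideanSpace ℝ (Fin N)) R) :
    (2 * R) ^ k * (volume (closedBall (0 : EuclideanSpace ℝ (Fin N)) R)).toReal ≤
      ∫ y in closedBall (0 : EuclideanSpace ℝ (Fin N)) R, ‖x - y‖ ^ k := by
  have hint : IntegrableOn (fun y : EuclideanSpace ℝ (Fin N) => ‖x - y‖ ^ k)
      (closedBall 0 R) :=
    integrableOn_norm_sub_rpow N hN hk₁ hk₂ x R (‖x‖ + R) le_rfl
  have hconst : IntegrableOn (fun _ : EuclideanSpace ℝ (Fin N) => (2 * R) ^ k)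
      (closedBall (0 : EuclideanSpace ℝ (Fin N)) R) :=
    integrableOn_const measure_closedBall_lt_top.ne
  have hae : (fun _ : EuclideanSpace ℝ (Fin N) => (2 * R) ^ k) ≤ᵐ[volume.restrict
      (closedBall (0 : EuclideanSpace ℝ (Fin N)) R)] fun y => ‖x - y‖ ^ k := by
    have h1 : ∀ᵐ y ∂(volume.restrict (closedBall (0 : EuclideanSpace ℝ (Fin N)) R)),
        y ∈ closedBall (0 : EuclideanSpace ℝ (Fin N)) R :=
      ae_restrict_mem measurableSet_closedBall
    have h2 : ∀ᵐ y ∂(volume.restrict (closedBall (0 : EuclideanSpace ℝ (Fin N)) R)),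
        y ≠ x := by
      refine ae_restrict_of_ae ?_
      rw [ae_iff]
      have : {a : EuclideanSpace ℝ (Fin N) | ¬a ≠ x} = {x} := by
        ext y; simp
      rw [this]
      exact volume_singleton N hN x
    filter_upwards [h1, h2] with y hy hyx
    have hpos : 0 < ‖x - y‖ := by
      rw [norm_pos_iff, sub_ne_zero]
      exact fun h => hyx h.symm
    have hle : ‖x - y‖ ≤ 2 * R := by
      rw [mem_closedBall_zero_iff] at hy
      rw [mem_closedBall_zero_iff] at hx
      calc ‖x - y‖ ≤ ‖x‖ + ‖y‖ := norm_sub_le _ _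
      _ ≤ 2 * R := by linarith
    exact Real.rpow_le_rpow_of_nonpos hpos hle hk₂.le
  have h := setIntegral_mono_ae_restrict hconst hint hae
  rw [setIntegral_const] at h
  rw [smul_eq_mul, mul_comm] at h
  exact h

lemma g_upper (N : ℕ) (hN : 1 ≤ N) {k : ℝ} (hk₁ : -(N : ℝ) < k) (hk₂ : k < 0) {R : ℝ}
    (hR : 0 < R) {x : EuclideanSpace ℝ (Fin N)}
    (hx : x ∈ closedBall (0 : EuclideanSpace ℝ (Fin N)) R) :
    (∫ y in closedBall (0 : EuclideanSpace ℝ (Fin N)) R, ‖x - y‖ ^ k) ≤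
      ∫ z in closedBall (0 : EuclideanSpace ℝ (Fin N)) (2 * R), ‖z‖ ^ k := by
  have hsub : closedBall (0 : EuclideanSpace ℝ (Fin N)) R ⊆
      (fun y : EuclideanSpace ℝ (Fin N) => x - y) ⁻¹'
        closedBall (0 : EuclideanSpace ℝ (Fin N)) (2 * R) := by
    intro y hy
    simp only [mem_preimage, mem_closedBall_zero_iff] at *
    calc ‖x - y‖ ≤ ‖x‖ + ‖y‖ := norm_sub_le _ _
    _ ≤ 2 * R := by linarith
  have hint2 : IntegrableOn (fun y : EuclideanSpace ℝ (Fin N) => ‖x - y‖ ^ k)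
      ((fun y : EuclideanSpace ℝ (Fin N) => x - y) ⁻¹'
        closedBall (0 : EuclideanSpace ℝ (Fin N)) (2 * R)) := by
    have h := ((Measure.measurePreserving_sub_left
        (volume : Measure (EuclideanSpace ℝ (Fin N))) x).integrableOn_comp_preimage
      (MeasurableEquiv.subLeft x).measurableEmbedding).mpr
      (integrableOn_norm_rpow N hN hk₁ hk₂ (2 * R))
    simpa [Function.comp_def] using h
  have h1 : (∫ y in closedBall (0 : EuclideanSpace ℝ (Fin N)) R, ‖x - y‖ ^ k) ≤
      ∫ y in (fun y : EuclideanSpace ℝ (Fin N) => x - y) ⁻¹'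
        closedBall (0 : EuclideanSpace ℝ (Fin N)) (2 * R), ‖x - y‖ ^ k :=
    setIntegral_mono_set hint2
      (Filter.Eventually.of_forall fun y => Real.rpow_nonneg (norm_nonneg _) k)
      (HasSubset.Subset.eventuallyLE hsub)
  exact h1.trans (le_of_eq (setIntegral_norm_sub_rpow_eq N x (2 * R)))

lemma main_bound (N : ℕ) (hN : 1 ≤ N) (χ k m M : ℝ) (hχ : 0 < χ)
    (hk₁ : -(N : ℝ) < k) (hk₂ : k < 0) (hm : 1 < m) (hM : 0 < M) (R : ℝ) (hR : 0 < R) :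
    freeEnergy N m χ k (rhoStar N M R) ≤
      (M ^ m * (N : ℝ) ^ (m - 1) * sphereArea N ^ (1 - m) / (m - 1)) *
          R ^ ((N : ℝ) * (1 - m)) +
        2 ^ (k - 1) * M ^ (2 : ℕ) * χ * R ^ k / k := by
  classical
  have hN0 : (0:ℝ) < N := by exact_mod_cast hN
  have hσ : 0 < sphereArea N := sphereArea_pos hN
  have hP : 0 < R ^ (N:ℝ) := Real.rpow_pos_of_pos hR _
  set B := closedBall (0 : EuclideanSpace ℝ (Fin N)) R with hB
  set c : ℝ := M * N / (sphereArea N * R ^ (N:ℝ)) with hc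
  have hcpos : 0 < c := by rw [hc]; positivity
  set V : ℝ := (volume B).toReal with hVdef
  have hV : V = sphereArea N * R ^ (N:ℝ) / N := volume_closedBall_toReal N hN hR
  have hVpos : 0 < V := by rw [hV]; positivity
  have hcV : c * V = M := by
    rw [hc, hV]
    field_simp
  have hρ : ∀ x, rhoStar N M R x = B.indicator (fun _ => c) x := fun x => rfl
  -- first term
  have h2 : (∫ x, rhoStar N M R x ^ m) = c ^ m * V := by
    have h1 : (fun x => rhoStar N M R x ^ m) = fun x => B.indicator (fun _ => c ^ m) x := by
      funext x
      rw [hρ, Set.indicator_apply, Set.indicator_apply]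
      split_ifs
      · rfl
      · exact Real.zero_rpow (by linarith)
    rw [h1, integral_indicator measurableSet_closedBall, setIntegral_const, smul_eq_mul,
      mul_comm]
    rfl
  -- inner integral
  set g : EuclideanSpace ℝ (Fin N) → ℝ := fun x => ∫ y in B, ‖x - y‖ ^ k with hg
  have hinner : ∀ x, (∫ y, ‖x - y‖ ^ k * rhoStar N M R x * rhoStar N M R y) =
      B.indicator (fun x => c * c * g x) x := by
    intro x
    by_cases hx : x ∈ B
    · rw [Set.indicator_of_mem hx]
      have hρx : rhoStar N M R x = c := by rw [hρ, Set.indicator_of_mem hx]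
      have heq : (fun y => ‖x - y‖ ^ k * rhoStar N M R x * rhoStar N M R y) =
          fun y => B.indicator (fun y => c * c * ‖x - y‖ ^ k) y := by
        funext y
        rw [hρx, hρ, Set.indicator_apply, Set.indicator_apply]
        split_ifs
        · ring
        · ring
      rw [heq, integral_indicator measurableSet_closedBall, integral_const_mul]
    · rw [Set.indicator_of_notMem hx]
      have hρx : rhoStar N M R x = 0 := by rw [hρ, Set.indicator_of_notMem hx]
      simp [hρx]
  have houter : (∫ x, ∫ y, ‖x - y‖ ^ k * rhoStar N M R x * rhoStar N M R y) =
      ∫ x, B.indicator (fun x => c * c * g x) x :=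
    integral_congr_ae (Filter.Eventually.of_forall hinner)
  -- integrability of the outer integrand
  set C : ℝ := ∫ z in closedBall (0 : EuclideanSpace ℝ (Fin N)) (2 * R), ‖z‖ ^ k with hC
  have hC0 : 0 ≤ C := integral_nonneg fun z => Real.rpow_nonneg (norm_nonneg _) k
  have hg0 : ∀ x, 0 ≤ g x := fun x => integral_nonneg fun y =>
    Real.rpow_nonneg (norm_nonneg _) k
  have hFmeas : AEStronglyMeasurable (fun x => B.indicator (fun x => c * c * g x) x) volume :=
    (((g_meas N k R).const_mul (c * c)).indicator measurableSet_closedBall).aestronglyMeasurable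
  have hboundInt : Integrable (fun x => B.indicator
      (fun _ : EuclideanSpace ℝ (Fin N) => c * c * C) x) volume :=
    (integrable_indicator_iff measurableSet_closedBall).2
      (integrableOn_const measure_closedBall_lt_top.ne)
  have hFint : Integrable (fun x => B.indicator (fun x => c * c * g x) x) volume := by
    refine Integrable.mono' hboundInt hFmeas (Filter.Eventually.of_forall fun x => ?_)
    by_cases hx : x ∈ B
    · rw [Set.indicator_of_mem hx, Set.indicator_of_mem hx, Real.norm_eq_abs,
        abs_of_nonneg (mul_nonneg (mul_nonneg hcpos.le hcpos.le) (hg0 x))]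
      exact mul_le_mul_of_nonneg_left (g_upper N hN hk₁ hk₂ hR hx) (by positivity)
    · rw [Set.indicator_of_notMem hx, Set.indicator_of_notMem hx]
      simp
  -- lower bound of the interaction integral
  have hHint : Integrable (fun x => B.indicator
      (fun _ : EuclideanSpace ℝ (Fin N) => c * c * ((2 * R) ^ k * V)) x) volume :=
    (integrable_indicator_iff measurableSet_closedBall).2
      (integrableOn_const measure_closedBall_lt_top.ne)
  have hHF : (fun x => B.indicator
        (fun _ : EuclideanSpace ℝ (Fin N) => c * c * ((2 * R) ^ k * V)) x) ≤
      fun x => B.indicator (fun x => c * c * g x) x := by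
    intro x
    dsimp only
    by_cases hx : x ∈ B
    · rw [Set.indicator_of_mem hx, Set.indicator_of_mem hx]
      exact mul_le_mul_of_nonneg_left (g_lower N hN hk₁ hk₂ hR hx) (by positivity)
    · rw [Set.indicator_of_notMem hx, Set.indicator_of_notMem hx]
  have hlow : V * (c * c * ((2 * R) ^ k * V)) ≤
      ∫ x, B.indicator (fun x => c * c * g x) x := by
    have h := integral_mono hHint hFint hHF
    rwa [integral_indicator measurableSet_closedBall, setIntegral_const, smul_eq_mul] at h
  -- put things together
  have hcoef : χ / (2 * k) < 0 := div_neg_of_pos_of_neg hχ (by linarith)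
  have E1 : (1 / (m - 1)) * (c ^ m * V) =
      (M ^ m * (N : ℝ) ^ (m - 1) * sphereArea N ^ (1 - m) / (m - 1)) *
        R ^ ((N : ℝ) * (1 - m)) := by
    have e1 : (N:ℝ) ^ (m - 1) = (N:ℝ) ^ m / (N:ℝ) := by
      rw [Real.rpow_sub hN0, Real.rpow_one]
    have e2 : sphereArea N ^ (1 - m) = sphereArea N / sphereArea N ^ m := by
      rw [Real.rpow_sub hσ, Real.rpow_one]
    have e3 : R ^ ((N:ℝ) * (1 - m)) = R ^ (N:ℝ) / (R ^ (N:ℝ)) ^ m := by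
      rw [Real.rpow_mul hR.le, Real.rpow_sub hP, Real.rpow_one]
    have hcm : c ^ m = M ^ m * (N:ℝ) ^ m / (sphereArea N ^ m * (R ^ (N:ℝ)) ^ m) := by
      rw [hc, Real.div_rpow (by positivity) (by positivity),
        Real.mul_rpow hM.le (le_of_lt hN0), Real.mul_rpow hσ.le hP.le]
    rw [hcm, hV, e1, e2, e3]
    have h1 : sphereArea N ^ m ≠ 0 := by positivity
    have h2 : (R ^ (N:ℝ)) ^ m ≠ 0 := by positivity
    have h3 : (N:ℝ) ≠ 0 := ne_of_gt hN0
    have h4 : m - 1 ≠ 0 := by linarith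
    field_simp
  have E2 : (χ / (2 * k)) * (V * (c * c * ((2 * R) ^ k * V))) =
      2 ^ (k - 1) * M ^ (2 : ℕ) * χ * R ^ k / k := by
    have hm2 : V * (c * c * ((2 * R) ^ k * V)) = M ^ (2:ℕ) * (2 * R) ^ k := by
      have : V * (c * c * ((2 * R) ^ k * V)) = (c * V) * (c * V) * (2 * R) ^ k := by ring
      rw [this, hcV]; ring
    rw [hm2, Real.mul_rpow (by norm_num) hR.le, Real.rpow_sub (by norm_num : (0:ℝ) < 2),
      Real.rpow_one]
    field_simp
  calc freeEnergy N m χ k (rhoStar N M R)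
      = (1 / (m - 1)) * (c ^ m * V) +
        (χ / (2 * k)) * ∫ x, B.indicator (fun x => c * c * g x) x := by
        rw [freeEnergy, h2, houter]
    _ ≤ (1 / (m - 1)) * (c ^ m * V) +
        (χ / (2 * k)) * (V * (c * c * ((2 * R) ^ k * V))) := by
        have := mul_le_mul_of_nonpos_left hlow hcoef.le
        linarith
    _ = _ := by rw [E1, E2]

/-- Energy bound for the normalised characteristic function of a ball, and negativity
of the free energy for large radii in the diffusion-dominated regime. -/
theorem freeEnergy_indicator_bound (N : ℕ) (hN : 1 ≤ N) (χ k m M : ℝ) (hχ : 0 < χ)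
    (hk₁ : -(N : ℝ) < k) (hk₂ : k < 0) (hm : 1 < m) (hM : 0 < M) :
    (∀ R : ℝ, 0 < R →
      freeEnergy N m χ k (rhoStar N M R) ≤
        (M ^ m * (N : ℝ) ^ (m - 1) * sphereArea N ^ (1 - m) / (m - 1)) *
            R ^ ((N : ℝ) * (1 - m)) +
          2 ^ (k - 1) * M ^ (2 : ℕ) * χ * R ^ k / k) ∧
    (1 - k / N < m → ∃ R : ℝ, 0 < R ∧ freeEnergy N m χ k (rhoStar N M R) < 0) := by
  have hN0 : (0:ℝ) < N := by exact_mod_cast hN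
  have hσ : 0 < sphereArea N := sphereArea_pos hN
  refine ⟨fun R hR => main_bound N hN χ k m M hχ hk₁ hk₂ hm hM R hR, fun hmc => ?_⟩
  set A : ℝ := M ^ m * (N : ℝ) ^ (m - 1) * sphereArea N ^ (1 - m) / (m - 1) with hA
  set B' : ℝ := 2 ^ (k - 1) * M ^ (2 : ℕ) * χ / k with hB'
  have hApos : 0 < A := by
    rw [hA]
    have h1 : (0:ℝ) < M ^ m := Real.rpow_pos_of_pos hM m
    have h2 : (0:ℝ) < (N:ℝ) ^ (m - 1) := Real.rpow_pos_of_pos hN0 _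
    have h3 : (0:ℝ) < sphereArea N ^ (1 - m) := Real.rpow_pos_of_pos hσ _
    have h4 : (0:ℝ) < m - 1 := by linarith
    positivity
  have hBneg : B' < 0 := by
    rw [hB']
    apply div_neg_of_pos_of_neg
    · have : (0:ℝ) < (2:ℝ) ^ (k - 1) := Real.rpow_pos_of_pos two_pos _
      positivity
    · exact hk₂
  have hBpos : 0 < -B' := by linarith
  set α : ℝ := k - (N:ℝ) * (1 - m) with hα
  have hαpos : 0 < α := by
    rw [hα]
    have h1 : 1 - m < k / N := by linarith
    have h2 : (1 - m) * N < k := (lt_div_iff₀ hN0).mp h1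
    linarith [h2]
  set R : ℝ := (A / (-B')) ^ α⁻¹ + 1 with hRdef
  have hbase : 0 ≤ A / (-B') := le_of_lt (div_pos hApos hBpos)
  have hR1 : (A / (-B')) ^ α⁻¹ < R := lt_add_one _
  have hR0 : 0 < R := lt_of_le_of_lt (Real.rpow_nonneg hbase _) hR1
  have hRα : A / (-B') < R ^ α := by
    have := Real.rpow_lt_rpow (Real.rpow_nonneg hbase _) hR1 hαpos
    rwa [Real.rpow_inv_rpow hbase hαpos.ne'] at this
  refine ⟨R, hR0, ?_⟩
  have hbound := main_bound N hN χ k m M hχ hk₁ hk₂ hm hM R hR0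
  have hRαpos : 0 < R ^ α := Real.rpow_pos_of_pos hR0 _
  have hRkpos : 0 < R ^ k := Real.rpow_pos_of_pos hR0 _
  have h1 : A < R ^ α * (-B') := (div_lt_iff₀ hBpos).mp hRα
  have h2 : A / R ^ α + B' < 0 := by
    have h3 : A / R ^ α < -B' := (div_lt_iff₀ hRαpos).mpr (by linarith)
    linarith
  have eR : R ^ ((N:ℝ) * (1 - m)) = R ^ k / R ^ α := by
    rw [hα, ← Real.rpow_sub hR0]
    congr 1
    ring
  have key : A * R ^ ((N:ℝ) * (1 - m)) + 2 ^ (k - 1) * M ^ (2 : ℕ) * χ * R ^ k / k < 0 := by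
    have e2 : A * R ^ ((N:ℝ) * (1 - m)) + 2 ^ (k - 1) * M ^ (2 : ℕ) * χ * R ^ k / k =
        R ^ k * (A / R ^ α + B') := by
      rw [eR, hB']
      field_simp
    rw [e2]
    exact mul_neg_of_pos_of_neg hRkpos h2
  calc freeEnergy N m χ k (rhoStar N M R) ≤ _ := hbound
  _ < 0 := key
end
end

section
/- Let N ≥ 2 and k ∈ (−N, 1−N). There exists a constant C₂ > 0 depending only on k and N such that: for every R > 0 and every measurable ρ : ℝ^N → ℝ with ρ ≥ 0 a.e., ∫_{ℝ^N} ρ = 1, ρ radially symmetric (ρ(x) = f(|x|) for some f : [0,∞) → [0,∞)), and ρ = 0 a.e. outside the ball B_R of radius R centered at the origin, one has ∫_{ℝ^N} |x−y|^k ρ(y) dy ≤ C₂ · ((|x|+R)/(|x|−R))^{1−k−N} · |x|^k for all x ∈ ℝ^N with |x| > R. -/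
open MeasureTheory Metric

noncomputable section

private lemma radial_ball_integral_congr {N : ℕ} (ρ : EuclideanSpace ℝ (Fin N) → ℝ)
    (f : ℝ → ℝ) (hf : ∀ y, ρ y = f ‖y‖) {x x' : EuclideanSpace ℝ (Fin N)}
    (h : ‖x‖ = ‖x'‖) (δ : ℝ) :
    ∫ y in ball x δ, ρ y = ∫ y in ball x' δ, ρ y := by
  set e := (Submodule.span ℝ {x - x'})ᗮ.reflection with he
  have hex : e x = x' := Submodule.reflection_sub h
  have hmp : MeasurePreserving e volume volume := e.measurePreserving
  have hemb : MeasurableEmbedding e := e.toHomeomorph.measurableEmbedding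
  have key : ∫ y in e ⁻¹' (ball x' δ), ρ (e y) = ∫ y in ball x' δ, ρ y :=
    hmp.setIntegral_preimage_emb hemb ρ _
  have hpre : e ⁻¹' (ball x' δ) = ball x δ := by
    ext y
    simp only [Set.mem_preimage, mem_ball, ← hex]
    rw [e.dist_map]
  have hcomp : (fun y => ρ (e y)) = ρ := by
    funext y; rw [hf, hf, e.norm_map]
  rw [← key, hpre, hcomp]

set_option maxHeartbeats 1000000 in
private lemma ball_mass {N : ℕ} (hN : 2 ≤ N) (ρ : EuclideanSpace ℝ (Fin N) → ℝ)
    (hpos : ∀ᵐ y ∂(volume : Measure (EuclideanSpace ℝ (Fin N))), 0 ≤ ρ y)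
    (hint : Integrable ρ) (hmass : ∫ y, ρ y = 1)
    (f : ℝ → ℝ) (hf : ∀ y, ρ y = f ‖y‖)
    (x : EuclideanSpace ℝ (Fin N)) {δ : ℝ} (hδ : 0 < δ) (hδ2 : 2 * δ ≤ ‖x‖) :
    ∫ y in ball x δ, ρ y ≤ 6 ^ N * (δ / ‖x‖) ^ (N - 1) := by
  obtain ⟨n, rfl⟩ : ∃ n, N = n + 1 := ⟨N - 1, by omega⟩
  haveI : Nonempty (Fin (n + 1)) := ⟨⟨0, by omega⟩⟩
  set t := ‖x‖ with ht
  have ht0 : 0 < t := by linarith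
  have htδ : 0 < t - δ := by linarith
  simp only [Nat.add_sub_cancel]
  set v1 := volume (ball (0 : EuclideanSpace ℝ (Fin (n+1))) 1) with hv1
  have hv1pos : 0 < v1 := measure_ball_pos _ _ one_pos
  have hv1top : v1 ≠ ⊤ := measure_ball_lt_top.ne
  have hfr : Module.finrank ℝ (EuclideanSpace ℝ (Fin (n+1))) = n + 1 :=
    finrank_euclideanSpace_fin
  -- the family of separated sets on the sphere of radius t
  set S : Set (Set (EuclideanSpace ℝ (Fin (n+1)))) :=
    {s | (∀ p ∈ s, ‖p‖ = t) ∧ s.Pairwise fun p q => 2 * δ < dist p q} with hS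
  have hzorn : ∀ c ⊆ S, IsChain (· ⊆ ·) c → c.Nonempty → ∃ ub ∈ S, ∀ s ∈ c, s ⊆ ub := by
    intro c hcS hchain _
    refine ⟨⋃₀ c, ⟨?_, ?_⟩, fun s hs => Set.subset_sUnion_of_mem hs⟩
    · rintro p ⟨s, hs, hps⟩; exact (hcS hs).1 p hps
    · rintro p ⟨s, hs, hps⟩ q ⟨u, hu, hqu⟩ hpq
      rcases hchain.total hs hu with h | h
      · exact (hcS hu).2 (h hps) hqu hpq
      · exact (hcS hs).2 hps (h hqu) hpq
  obtain ⟨m, -, hmax⟩ := zorn_subset_nonempty S hzorn ∅ ⟨by simp, Set.pairwise_empty _⟩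
  have hmS1 : ∀ p ∈ m, ‖p‖ = t := hmax.1.1
  have hmS2 : m.Pairwise fun p q => 2 * δ < dist p q := hmax.1.2
  -- cardinality bound for finite subsets
  have hcard : ∀ u : Finset (EuclideanSpace ℝ (Fin (n+1))), ↑u ⊆ m →
      (u.card : ℝ) * δ ^ (n+1) ≤ (t + δ) ^ (n+1) := by
    intro u hu
    have hdisj : (↑u : Set (EuclideanSpace ℝ (Fin (n+1)))).PairwiseDisjoint
        (fun p => ball p δ) := by
      intro p hp q hq hpq
      exact ball_disjoint_ball (by linarith [hmS2 (hu hp) (hu hq) hpq])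
    have hsub : ⋃ p ∈ u, ball p δ ⊆ ball 0 (t + δ) := by
      intro z hz
      simp only [Set.mem_iUnion] at hz
      obtain ⟨p, hp, hz⟩ := hz
      rw [mem_ball] at hz ⊢
      have hpn : ‖p‖ = t := hmS1 p (hu hp)
      calc dist z 0 ≤ dist z p + dist p 0 := dist_triangle _ _ _
        _ < δ + t := by rw [dist_zero_right, hpn]; linarith
        _ = t + δ := by ring
    have hμ : volume (⋃ p ∈ u, ball p δ)
        = (u.card : ENNReal) * (ENNReal.ofReal (δ ^ (n+1)) * v1) := by
      rw [measure_biUnion_finset hdisj (fun p _ => measurableSet_ball)]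
      have : ∀ p ∈ u, volume (ball p δ) = ENNReal.ofReal (δ ^ (n+1)) * v1 := by
        intro p _
        rw [Measure.addHaar_ball volume p hδ.le, hfr]
      rw [Finset.sum_congr rfl this, Finset.sum_const, nsmul_eq_mul]
    have hmono : volume (⋃ p ∈ u, ball p δ) ≤ volume (ball (0 : EuclideanSpace ℝ (Fin (n+1))) (t + δ)) :=
      measure_mono hsub
    rw [hμ, Measure.addHaar_ball volume _ (by positivity : (0:ℝ) ≤ t + δ), hfr] at hmono
    rw [← mul_assoc] at hmono
    have := (ENNReal.mul_le_mul_iff_left hv1pos.ne' hv1top).mp hmono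
    rw [← ENNReal.ofReal_natCast, ← ENNReal.ofReal_mul (by positivity)] at this
    exact (ENNReal.ofReal_le_ofReal_iff (by positivity)).mp this
  -- m is finite
  have hmfin : m.Finite := by
    by_contra hinf
    obtain ⟨u, hu, hcardu⟩ :=
      (show m.Infinite from hinf).exists_subset_card_eq
        (⌈(t + δ) ^ (n+1) / δ ^ (n+1)⌉₊ + 1)
    have h1 := hcard u hu
    have hδN : (0:ℝ) < δ ^ (n+1) := by positivity
    have h2 : (t + δ) ^ (n+1) / δ ^ (n+1) < (u.card : ℝ) := by
      rw [hcardu]; push_cast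
      have := Nat.le_ceil ((t + δ) ^ (n+1) / δ ^ (n+1))
      linarith
    rw [div_lt_iff₀ hδN] at h2
    linarith
  -- maximality gives covering property
  have hcov : ∀ z : EuclideanSpace ℝ (Fin (n+1)), ‖z‖ = t → ∃ p ∈ m, dist z p ≤ 2 * δ := by
    intro z hz
    by_contra hc
    push_neg at hc
    have hzm : z ∉ m := by
      intro h
      have := hc z h
      simp only [dist_self] at this
      linarith
    have hins : insert z m ∈ S := by
      constructor
      · rintro p (rfl | hp)
        · exact hz
        · exact hmS1 p hp
      · rw [Set.pairwise_insert]
        exact ⟨hmS2, fun q hq _ => ⟨hc q hq, by rw [dist_comm]; exact hc q hq⟩⟩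
    exact hzm (hmax.2 hins (Set.subset_insert z m) (Set.mem_insert z m))

  -- annulus is covered by the 3δ-balls around m
  have hann : closedBall (0 : EuclideanSpace ℝ (Fin (n+1))) (t + δ) \ ball 0 (t - δ)
      ⊆ ⋃ p ∈ hmfin.toFinset, closedBall p (3 * δ) := by
    rintro z ⟨hz1, hz2⟩
    rw [mem_closedBall, dist_zero_right] at hz1
    have hz2' : t - δ ≤ ‖z‖ := by
      rw [mem_ball, dist_zero_right, not_lt] at hz2
      exact hz2
    have hzpos : 0 < ‖z‖ := lt_of_lt_of_le htδ hz2'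
    set w := (t / ‖z‖) • z with hw
    have hwn : ‖w‖ = t := by
      rw [hw, norm_smul, Real.norm_eq_abs, abs_of_pos (by positivity), div_mul_cancel₀]
      exact hzpos.ne'
    obtain ⟨p, hp, hpw⟩ := hcov w hwn
    refine Set.mem_iUnion₂.mpr ⟨p, hmfin.mem_toFinset.mpr hp, ?_⟩
    rw [mem_closedBall]
    have hzw : dist z w ≤ δ := by
      have : z - w = (1 - t / ‖z‖) • z := by
        rw [hw, sub_smul, one_smul]
      rw [dist_eq_norm, this, norm_smul, Real.norm_eq_abs]
      have heq : (1 - t / ‖z‖) * ‖z‖ = ‖z‖ - t := by field_simp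
      have habs : |1 - t / ‖z‖| * ‖z‖ = |‖z‖ - t| := by
        calc |1 - t / ‖z‖| * ‖z‖ = |(1 - t / ‖z‖) * ‖z‖| := by rw [abs_mul, abs_of_pos hzpos]
          _ = |‖z‖ - t| := by rw [heq]
      rw [habs, abs_le]
      constructor <;> linarith
    calc dist z p ≤ dist z w + dist w p := dist_triangle _ _ _
      _ ≤ δ + 2 * δ := add_le_add hzw hpw
      _ = 3 * δ := by ring
  -- volume comparison gives lower bound on card
  set c : ℕ := hmfin.toFinset.card with hc
  have hvol : (t + δ) ^ (n+1) ≤ (c : ℝ) * (3 * δ) ^ (n+1) + (t - δ) ^ (n+1) := by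
    have hcover2 : closedBall (0 : EuclideanSpace ℝ (Fin (n+1))) (t + δ)
        ⊆ (⋃ p ∈ hmfin.toFinset, closedBall p (3 * δ)) ∪ ball 0 (t - δ) := by
      intro z hz
      by_cases h : z ∈ ball (0 : EuclideanSpace ℝ (Fin (n+1))) (t - δ)
      · exact Or.inr h
      · exact Or.inl (hann ⟨hz, h⟩)
    have h1 : volume (closedBall (0 : EuclideanSpace ℝ (Fin (n+1))) (t + δ))
        ≤ volume (⋃ p ∈ hmfin.toFinset, closedBall p (3 * δ)) + volume (ball (0 : EuclideanSpace ℝ (Fin (n+1))) (t - δ)) :=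
      (measure_mono hcover2).trans (measure_union_le _ _)
    have h2 : volume (⋃ p ∈ hmfin.toFinset, closedBall p (3 * δ))
        ≤ (c : ENNReal) * (ENNReal.ofReal ((3 * δ) ^ (n+1)) * v1) := by
      refine (measure_biUnion_finset_le _ _).trans ?_
      have : ∀ p ∈ hmfin.toFinset, volume (closedBall p (3 * δ))
          = ENNReal.ofReal ((3 * δ) ^ (n+1)) * v1 := by
        intro p _
        rw [Measure.addHaar_closedBall volume p (by positivity), hfr]
      rw [Finset.sum_congr rfl this, Finset.sum_const, nsmul_eq_mul]
    rw [Measure.addHaar_closedBall volume _ (by positivity : (0:ℝ) ≤ t + δ), hfr,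
      Measure.addHaar_ball volume _ htδ.le, hfr] at h1
    have h3 : ENNReal.ofReal ((t + δ) ^ (n+1)) * v1
        ≤ (ENNReal.ofReal ((c : ℝ) * (3 * δ) ^ (n+1)) + ENNReal.ofReal ((t - δ) ^ (n+1))) * v1 := by
      refine h1.trans ?_
      rw [add_mul]
      gcongr
      rw [ENNReal.ofReal_mul (by positivity), ENNReal.ofReal_natCast, mul_assoc]
      exact h2
    have h4 := (ENNReal.mul_le_mul_iff_left hv1pos.ne' hv1top).mp h3
    rw [← ENNReal.ofReal_add (by positivity) (by positivity)] at h4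
    exact (ENNReal.ofReal_le_ofReal_iff (by positivity)).mp h4
  -- lower bound on (t+δ)^(n+1) - (t-δ)^(n+1)
  have hAB : 2 * δ * (t / 2) ^ n ≤ (t + δ) ^ (n+1) - (t - δ) ^ (n+1) := by
    have hh1 : (t / 2 : ℝ) ^ n ≤ (t - δ) ^ n :=
      pow_le_pow_left₀ (by positivity) (by linarith) n
    have hh2 : (t - δ) ^ n ≤ (t + δ) ^ n :=
      pow_le_pow_left₀ htδ.le (by linarith) n
    have e1 : (t + δ) ^ (n+1) = (t + δ) ^ n * (t + δ) := pow_succ _ _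
    have e2 : (t - δ) ^ (n+1) = (t - δ) ^ n * (t - δ) := pow_succ _ _
    have key : (t - δ) ^ n * (2 * δ) ≤ (t + δ) ^ (n+1) - (t - δ) ^ (n+1) := by
      rw [e1, e2]
      nlinarith [hh2, htδ.le, hδ.le]
    nlinarith [hh1, hδ.le]
  -- key product identity
  have hRHS : (0:ℝ) ≤ 6 ^ (n+1) * (δ / t) ^ n := by positivity
  have hkey : (6:ℝ) ^ (n+1) * (δ / t) ^ n * (2 * δ * (t / 2) ^ n) = 4 * (3 * δ) ^ (n+1) := by
    have h6 : (6:ℝ) ^ (n+1) = 2 ^ (n+1) * 3 ^ (n+1) := by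
      rw [show (6:ℝ) = 2 * 3 by norm_num, mul_pow]
    have htn : (t:ℝ) ≠ 0 := ht0.ne'
    rw [div_pow, div_pow, mul_pow, h6]
    field_simp
    ring
  have hcpos : (0:ℝ) < c := by
    have h5 : 2 * δ * (t / 2) ^ n ≤ (c : ℝ) * (3 * δ) ^ (n+1) := by linarith
    have : (0:ℝ) < 2 * δ * (t / 2) ^ n := by positivity
    have h6 : (0:ℝ) < (3 * δ) ^ (n+1) := by positivity
    nlinarith
  -- mass bound
  have hmass_le : (c : ℝ) * ∫ y in ball x δ, ρ y ≤ 1 := by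
    have heach : ∀ p ∈ hmfin.toFinset, ∫ y in ball p δ, ρ y = ∫ y in ball x δ, ρ y := by
      intro p hp
      exact radial_ball_integral_congr ρ f hf ((hmS1 p (hmfin.mem_toFinset.mp hp)).trans ht) δ
    have hdisj : (↑hmfin.toFinset : Set (EuclideanSpace ℝ (Fin (n+1)))).Pairwise
        (Function.onFun Disjoint fun p => ball p δ) := by
      intro p hp q hq hpq
      refine ball_disjoint_ball ?_
      rw [Set.Finite.coe_toFinset] at hp hq
      linarith [hmS2 hp hq hpq]
    have hunion := integral_biUnion_finset hmfin.toFinset (fun p _ => measurableSet_ball)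
      hdisj (fun p _ => hint.integrableOn)
    have hle : ∫ y in ⋃ p ∈ hmfin.toFinset, ball p δ, ρ y ≤ 1 := by
      rw [← hmass]
      exact setIntegral_le_integral hint hpos
    rw [hunion, Finset.sum_congr rfl heach, Finset.sum_const, nsmul_eq_mul] at hle
    exact hle
  -- conclude
  have hI1 : ∫ y in ball x δ, ρ y ≤ 1 / (c : ℝ) := by
    rw [le_div_iff₀ hcpos, mul_comm]
    exact hmass_le
  refine hI1.trans ?_
  rw [div_le_iff₀ hcpos]
  -- 1 ≤ RHS * c
  have h5 : 2 * δ * (t / 2) ^ n ≤ (c : ℝ) * (3 * δ) ^ (n+1) := by linarith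
  have h6 : (0:ℝ) < (3 * δ) ^ (n+1) := by positivity
  have h7 : 4 * (3 * δ) ^ (n+1) ≤ 6 ^ (n+1) * (δ / t) ^ n * ((c : ℝ) * (3 * δ) ^ (n+1)) := by
    rw [← hkey]
    exact mul_le_mul_of_nonneg_left h5 hRHS
  nlinarith [hRHS, h6, h7]


private lemma two_pow_mul_rpow {a : ℝ} (ha : 0 < a) (c : ℝ) (j : ℕ) :
    ((2:ℝ) ^ j * a) ^ c = ((2:ℝ) ^ c) ^ j * a ^ c := by
  rw [Real.mul_rpow (by positivity) ha.le, ← Real.rpow_natCast (2:ℝ) j,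
    ← Real.rpow_mul (by norm_num), mul_comm (j:ℝ) c, Real.rpow_mul (by norm_num),
    Real.rpow_natCast]

private lemma alg1 {N : ℕ} (hN : 1 ≤ N) {k a t : ℝ} (ha : 0 < a) (ht : 0 < t) (j : ℕ) :
    ((2:ℝ) ^ j * a) ^ k * (((2:ℝ) ^ (j+1) * a) / t) ^ (N-1)
      = 2 ^ (N-1) * (((2:ℝ) ^ (k + ↑N - 1)) ^ j * (a ^ (k + ↑N - 1) * t ^ (1 - (N:ℝ)))) := by
  have hu : (0:ℝ) < 2 ^ j * a := by positivity
  have hNc : ((N - 1 : ℕ) : ℝ) = (N:ℝ) - 1 := by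
    rw [Nat.cast_sub hN, Nat.cast_one]
  have h1 : (((2:ℝ) ^ (j+1) * a) / t) ^ (N-1)
      = 2 ^ (N-1) * ((2 ^ j * a) ^ (N-1) * (t ^ (N-1))⁻¹) := by
    rw [div_pow, pow_succ, div_eq_mul_inv, show ((2:ℝ) ^ j * 2 * a) = 2 * (2 ^ j * a) from by ring,
      mul_pow]
    ring
  have h2 : ((2:ℝ) ^ j * a) ^ k * ((2 ^ j * a) ^ (N-1)) = (2 ^ j * a) ^ (k + ↑N - 1) := by
    rw [← Real.rpow_natCast ((2:ℝ) ^ j * a) (N-1), ← Real.rpow_add hu, hNc,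
      show k + ((N:ℝ) - 1) = k + ↑N - 1 from by ring]
  have h3 : ((t:ℝ) ^ (N-1))⁻¹ = t ^ (1 - (N:ℝ)) := by
    rw [← Real.rpow_natCast t (N-1), hNc, ← Real.rpow_neg ht.le,
      show -((N:ℝ) - 1) = 1 - (N:ℝ) from by ring]
  have h4 : ((2:ℝ) ^ j * a) ^ (k + ↑N - 1) = ((2:ℝ) ^ (k + ↑N - 1)) ^ j * a ^ (k + ↑N - 1) :=
    two_pow_mul_rpow ha _ j
  calc ((2:ℝ) ^ j * a) ^ k * (((2:ℝ) ^ (j+1) * a) / t) ^ (N-1)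
      = 2 ^ (N-1) * ((((2:ℝ) ^ j * a) ^ k * ((2 ^ j * a) ^ (N-1))) * (t ^ (N-1))⁻¹) := by
        rw [h1]; ring
    _ = _ := by rw [h2, h3, h4]; ring

private lemma alg2 {N : ℕ} (hN : 1 ≤ N) {k a t : ℝ} (ha : 0 < a) (ht : 0 < t)
    (j : ℕ) (hcase : t < 4 * (2 ^ j * a)) :
    ((2:ℝ) ^ j * a) ^ k
      ≤ 4 ^ (N-1) * (((2:ℝ) ^ (k + ↑N - 1)) ^ j * (a ^ (k + ↑N - 1) * t ^ (1 - (N:ℝ)))) := by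
  have hu : (0:ℝ) < 2 ^ j * a := by positivity
  have hN1 : (1:ℝ) ≤ (N:ℝ) := by exact_mod_cast hN
  have hNc : ((N - 1 : ℕ) : ℝ) = (N:ℝ) - 1 := by
    rw [Nat.cast_sub hN, Nat.cast_one]
  have h1 : ((2:ℝ) ^ j * a) ^ k = (2 ^ j * a) ^ (k + ↑N - 1) * (2 ^ j * a) ^ (1 - (N:ℝ)) := by
    rw [← Real.rpow_add hu]; congr 1; ring
  have h2 : ((2:ℝ) ^ j * a) ^ (1 - (N:ℝ)) ≤ (t / 4) ^ (1 - (N:ℝ)) :=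
    Real.rpow_le_rpow_of_nonpos (by positivity) (by linarith) (by linarith)
  have h3 : ((t:ℝ) / 4) ^ (1 - (N:ℝ)) = 4 ^ (N-1) * t ^ (1 - (N:ℝ)) := by
    rw [Real.div_rpow ht.le (by norm_num), div_eq_mul_inv,
      ← Real.rpow_neg (by norm_num : (0:ℝ) ≤ 4),
      show -(1 - (N:ℝ)) = (N:ℝ) - 1 from by ring, ← hNc, Real.rpow_natCast]
    ring
  have h4 : ((2:ℝ) ^ j * a) ^ (k + ↑N - 1) = ((2:ℝ) ^ (k + ↑N - 1)) ^ j * a ^ (k + ↑N - 1) :=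
    two_pow_mul_rpow ha _ j
  have hnn : (0:ℝ) ≤ (2 ^ j * a : ℝ) ^ (k + ↑N - 1) := Real.rpow_nonneg hu.le _
  calc ((2:ℝ) ^ j * a) ^ k = (2 ^ j * a) ^ (k + ↑N - 1) * (2 ^ j * a) ^ (1 - (N:ℝ)) := h1
    _ ≤ (2 ^ j * a) ^ (k + ↑N - 1) * ((t / 4) ^ (1 - (N:ℝ))) :=
        mul_le_mul_of_nonneg_left h2 hnn
    _ = 4 ^ (N-1) * (((2:ℝ) ^ (k + ↑N - 1)) ^ j * (a ^ (k + ↑N - 1) * t ^ (1 - (N:ℝ)))) := by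
        rw [h3, h4]; ring

set_option maxHeartbeats 1000000 in
/-- Riesz potential estimate outside the support for radially symmetric compactly
supported probability densities, in the singular range `k ∈ (-N, 1-N)`. -/
theorem riesz_potential_estimate_singular (N : ℕ) (hN : 2 ≤ N) (k : ℝ)
    (hk₁ : -(N : ℝ) < k) (hk₂ : k < 1 - (N : ℝ)) :
    ∃ C₂ : ℝ, 0 < C₂ ∧
      ∀ R : ℝ, 0 < R →
      ∀ ρ : EuclideanSpace ℝ (Fin N) → ℝ, Measurable ρ →
        (∀ᵐ x ∂volume, 0 ≤ ρ x) → (∫ x, ρ x) = 1 →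
        (∃ f : ℝ → ℝ, (∀ r ∈ Set.Ici (0 : ℝ), 0 ≤ f r) ∧ ∀ x, ρ x = f ‖x‖) →
        (∀ᵐ x ∂volume, x ∉ Metric.closedBall (0 : EuclideanSpace ℝ (Fin N)) R → ρ x = 0) →
        ∀ x : EuclideanSpace ℝ (Fin N), R < ‖x‖ →
          (∫ y, ‖x - y‖ ^ k * ρ y) ≤
            C₂ * ((‖x‖ + R) / (‖x‖ - R)) ^ (1 - k - N) * ‖x‖ ^ k := by
  have hNR : (2:ℝ) ≤ (N:ℝ) := by exact_mod_cast hN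
  have hkneg : k < 0 := by linarith
  have hexp_neg : k + (N:ℝ) - 1 < 0 := by linarith
  set q : ℝ := (2:ℝ) ^ (k + (N:ℝ) - 1) with hq
  have hq0 : 0 < q := Real.rpow_pos_of_pos two_pos _
  have hq1 : q < 1 := Real.rpow_lt_one_of_one_lt_of_neg one_lt_two hexp_neg
  set D : ℝ := (6:ℝ) ^ N * 2 ^ (N-1) + 4 ^ (N-1) with hD
  have hD0 : 0 < D := by positivity
  refine ⟨D / (1 - q), div_pos hD0 (by linarith), ?_⟩
  intro R hR ρ hmeas hpos hmass hrad hsupp x hx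
  obtain ⟨f, -, hf⟩ := hrad
  have ht0 : 0 < ‖x‖ := hR.trans hx
  set t := ‖x‖ with htdef
  have ha0 : 0 < t - R := by simp only [htdef]; linarith
  set a := t - R with hadef
  have hint : Integrable ρ := by
    by_contra h
    rw [integral_undef h] at hmass
    norm_num at hmass
  -- measurability and integrability of the integrand
  have hg_meas : AEStronglyMeasurable (fun y => ‖x - y‖ ^ k * ρ y)
      (volume : Measure (EuclideanSpace ℝ (Fin N))) := by
    have h : Measurable (fun y : EuclideanSpace ℝ (Fin N) => ‖x - y‖) :=
      (measurable_const.sub measurable_id).norm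
    have h2 : Measurable (fun y : EuclideanSpace ℝ (Fin N) => ‖x - y‖ ^ k) := by fun_prop
    exact (h2.mul hmeas).aestronglyMeasurable
  have hg_bound : ∀ᵐ y ∂(volume : Measure (EuclideanSpace ℝ (Fin N))),
      ‖‖x - y‖ ^ k * ρ y‖ ≤ a ^ k * ρ y := by
    filter_upwards [hpos, hsupp] with y hy hs
    by_cases hyR : y ∈ Metric.closedBall (0 : EuclideanSpace ℝ (Fin N)) R
    · have hyn : ‖y‖ ≤ R := by rwa [mem_closedBall, dist_zero_right] at hyR
      have h1 : a ≤ ‖x - y‖ := by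
        have := norm_sub_norm_le x y
        simp only [hadef, htdef]
        linarith
      have h2 : ‖x - y‖ ^ k ≤ a ^ k := Real.rpow_le_rpow_of_nonpos ha0 h1 hkneg.le
      rw [Real.norm_eq_abs, abs_of_nonneg (mul_nonneg (Real.rpow_nonneg (norm_nonneg _) k) hy)]
      exact mul_le_mul_of_nonneg_right h2 hy
    · rw [hs hyR]
      simp
  have hg_int : Integrable (fun y => ‖x - y‖ ^ k * ρ y) :=
    (hint.const_mul (a ^ k)).mono' hg_meas hg_bound
  -- dyadic annuli
  set A : ℕ → Set (EuclideanSpace ℝ (Fin N)) :=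
    fun j => ball x (2 ^ (j+1) * a) \ ball x (2 ^ j * a) with hA
  have hAmeas : ∀ j, MeasurableSet (A j) := fun j => measurableSet_ball.diff measurableSet_ball
  have hkey_disj : ∀ i j, i < j → Disjoint (A i) (A j) := by
    intro i j hij
    have hsub : A i ⊆ ball x (2 ^ j * a) := by
      refine Set.diff_subset.trans (ball_subset_ball ?_)
      have h2 : (2:ℝ) ^ (i+1) ≤ 2 ^ j := pow_le_pow_right₀ one_le_two (by omega)
      nlinarith [ha0.le]
    exact Set.disjoint_sdiff_right.mono_left hsub
  have hAdisj : Pairwise (Function.onFun Disjoint A) := by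
    intro i j hne
    rcases hne.lt_or_gt with h | h
    · exact hkey_disj i j h
    · exact (hkey_disj j i h).symm
  have hcover : ∀ y, a ≤ dist y x → y ∈ ⋃ j, A j := by
    intro y hy
    have hda : 1 ≤ dist y x / a := (one_le_div ha0).mpr hy
    obtain ⟨nn, hnn⟩ := pow_unbounded_of_one_lt (dist y x / a) one_lt_two
    have hex : ∃ nn : ℕ, dist y x / a < 2 ^ nn := ⟨nn, hnn⟩
    have hspec : dist y x / a < 2 ^ Nat.find hex := Nat.find_spec hex
    have hn0pos : Nat.find hex ≠ 0 := by
      intro h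
      rw [h] at hspec
      simp at hspec
      linarith
    have hmin := Nat.find_min hex (show Nat.find hex - 1 < Nat.find hex by omega)
    push_neg at hmin
    refine Set.mem_iUnion.mpr ⟨Nat.find hex - 1, ?_⟩
    constructor
    · rw [mem_ball]
      have he : Nat.find hex - 1 + 1 = Nat.find hex := by omega
      rw [he]
      rw [div_lt_iff₀ ha0] at hspec
      linarith
    · intro hmem
      rw [mem_ball] at hmem
      rw [le_div_iff₀ ha0] at hmin
      linarith
  -- reduce to the integral over the union of annuli
  have hIeq : ∫ y, ‖x - y‖ ^ k * ρ y = ∫ y in ⋃ j, A j, ‖x - y‖ ^ k * ρ y := by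
    refine (setIntegral_eq_integral_of_ae_compl_eq_zero ?_).symm
    filter_upwards [hsupp] with y hs hnot
    have hdy : dist y x < a := by
      by_contra h
      push_neg at h
      exact hnot (hcover y h)
    have hyR : y ∉ Metric.closedBall (0 : EuclideanSpace ℝ (Fin N)) R := by
      simp only [mem_closedBall, dist_zero_right, not_le]
      have h1 := norm_sub_norm_le x y
      have h2 : ‖x - y‖ = dist y x := by rw [dist_eq_norm, norm_sub_rev]
      rw [hadef] at hdy
      linarith [h2 ▸ h1]
    rw [hs hyR, mul_zero]
  have hHasSum : HasSum (fun j => ∫ y in A j, ‖x - y‖ ^ k * ρ y)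
      (∫ y in ⋃ j, A j, ‖x - y‖ ^ k * ρ y) :=
    hasSum_integral_iUnion hAmeas hAdisj hg_int.integrableOn
  set P : ℝ := a ^ (k + ↑N - 1) * t ^ (1 - (N:ℝ)) with hPdef
  have hP0 : 0 ≤ P := mul_nonneg (Real.rpow_nonneg ha0.le _) (Real.rpow_nonneg ht0.le _)
  -- bound each term
  have hterm : ∀ j, ∫ y in A j, ‖x - y‖ ^ k * ρ y ≤ (D * P) * q ^ j := by
    intro j
    have hu0 : (0:ℝ) < 2 ^ j * a := by positivity
    have hmj0 : 0 ≤ ∫ y in A j, ρ y := integral_nonneg_of_ae (ae_restrict_of_ae hpos)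
    have hstep1 : ∫ y in A j, ‖x - y‖ ^ k * ρ y ≤ (2 ^ j * a) ^ k * ∫ y in A j, ρ y := by
      rw [← integral_const_mul]
      refine setIntegral_mono_ae_restrict hg_int.integrableOn (hint.const_mul _).integrableOn ?_
      filter_upwards [ae_restrict_of_ae hpos, ae_restrict_mem (hAmeas j)] with y hy hyA
      have h1 : 2 ^ j * a ≤ ‖x - y‖ := by
        have h2 := hyA.2
        rw [mem_ball, not_lt] at h2
        rwa [dist_eq_norm, norm_sub_rev] at h2
      exact mul_le_mul_of_nonneg_right (Real.rpow_le_rpow_of_nonpos hu0 h1 hkneg.le) hy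
    have hqP0 : (0:ℝ) ≤ q ^ j * P := mul_nonneg (pow_nonneg hq0.le j) hP0
    by_cases hcase : 2 * (2 ^ (j+1) * a) ≤ t
    · have hδpos : (0:ℝ) < 2 ^ (j+1) * a := by positivity
      have hball : ∫ y in A j, ρ y ≤ ∫ y in ball x (2 ^ (j+1) * a), ρ y :=
        setIntegral_mono_set hint.integrableOn (ae_restrict_of_ae hpos)
          (HasSubset.Subset.eventuallyLE Set.diff_subset)
      have hmassb := ball_mass hN ρ hpos hint hmass f hf x hδpos hcase
      have hmj : ∫ y in A j, ρ y ≤ 6 ^ N * ((2 ^ (j+1) * a) / t) ^ (N-1) :=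
        hball.trans hmassb
      have hchain : ∫ y in A j, ‖x - y‖ ^ k * ρ y
          ≤ (2 ^ j * a) ^ k * (6 ^ N * ((2 ^ (j+1) * a) / t) ^ (N-1)) :=
        hstep1.trans (mul_le_mul_of_nonneg_left hmj (Real.rpow_nonneg hu0.le k))
      refine hchain.trans ?_
      have halg := alg1 (by omega : 1 ≤ N) ha0 ht0 j (k := k)
      calc (2 ^ j * a) ^ k * (6 ^ N * ((2 ^ (j+1) * a) / t) ^ (N-1))
          = 6 ^ N * ((2 ^ j * a) ^ k * ((2 ^ (j+1) * a) / t) ^ (N-1)) := by ring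
        _ = (6 ^ N * 2 ^ (N-1)) * (q ^ j * P) := by rw [halg]; ring
        _ ≤ D * (q ^ j * P) := by
            refine mul_le_mul_of_nonneg_right ?_ hqP0
            rw [hD]
            have : (0:ℝ) ≤ 4 ^ (N-1) := by positivity
            linarith
        _ = (D * P) * q ^ j := by ring
    · push_neg at hcase
      have hmj1 : ∫ y in A j, ρ y ≤ 1 := by
        rw [← hmass]
        exact setIntegral_le_integral hint hpos
      have hchain : ∫ y in A j, ‖x - y‖ ^ k * ρ y ≤ (2 ^ j * a) ^ k := by
        refine hstep1.trans ?_
        have := mul_le_mul_of_nonneg_left hmj1 (Real.rpow_nonneg hu0.le k)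
        simpa using this
      refine hchain.trans ?_
      have hcase' : t < 4 * (2 ^ j * a) := by
        have : (2:ℝ) ^ (j+1) = 2 * 2 ^ j := by rw [pow_succ]; ring
        nlinarith [ha0.le]
      have halg := alg2 (by omega : 1 ≤ N) ha0 ht0 j hcase' (k := k)
      refine halg.trans ?_
      calc (4:ℝ) ^ (N-1) * (q ^ j * P) ≤ D * (q ^ j * P) := by
            refine mul_le_mul_of_nonneg_right ?_ hqP0
            rw [hD]
            have : (0:ℝ) ≤ 6 ^ N * 2 ^ (N-1) := by positivity
            linarith
        _ = (D * P) * q ^ j := by ring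
  have hgeo : HasSum (fun j => (D * P) * q ^ j) ((D * P) * (1 - q)⁻¹) :=
    (hasSum_geometric_of_lt_one hq0.le hq1).mul_left _
  have hsum_le : ∫ y in ⋃ j, A j, ‖x - y‖ ^ k * ρ y ≤ (D * P) * (1 - q)⁻¹ :=
    hasSum_le hterm hHasSum hgeo
  rw [hIeq]
  refine hsum_le.trans ?_
  have hfinal : P ≤ ((t + R) / a) ^ (1 - k - ↑N) * t ^ k := by
    have h1 : (t / a) ^ (1 - k - ↑N) ≤ ((t + R) / a) ^ (1 - k - ↑N) := by
      refine Real.rpow_le_rpow (by positivity) ?_ (by linarith)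
      gcongr
      linarith
    have h2 : (t / a) ^ (1 - k - ↑N) * t ^ k = P := by
      rw [Real.div_rpow ht0.le ha0.le, hPdef, div_eq_mul_inv, ← Real.rpow_neg ha0.le,
        show -(1 - k - (N:ℝ)) = k + ↑N - 1 from by ring,
        mul_comm (t ^ (1 - k - ↑N)) (a ^ (k + ↑N - 1)), mul_assoc, ← Real.rpow_add ht0,
        show 1 - k - (N:ℝ) + k = 1 - (N:ℝ) from by ring]
    calc P = (t / a) ^ (1 - k - ↑N) * t ^ k := h2.symm
      _ ≤ ((t + R) / a) ^ (1 - k - ↑N) * t ^ k :=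
          mul_le_mul_of_nonneg_right h1 (Real.rpow_nonneg ht0.le k)
  calc (D * P) * (1 - q)⁻¹ = (D / (1 - q)) * P := by rw [div_eq_mul_inv]; ring
    _ ≤ (D / (1 - q)) * (((t + R) / a) ^ (1 - k - ↑N) * t ^ k) := by
        exact mul_le_mul_of_nonneg_left hfinal (div_pos hD0 (by linarith)).le
    _ = (D / (1 - q)) * ((t + R) / a) ^ (1 - k - ↑N) * t ^ k := by ring
end
end

section
/- Let N ≥ 2 and k = 1−N. There exists a constant C₂ > 0 depending only on N such that: for every R > 0 and every measurable ρ : ℝ^N → ℝ with ρ ≥ 0 a.e., ∫_{ℝ^N} ρ = 1, ρ radially symmetric (ρ(x) = f(|x|) for some f : [0,∞) → [0,∞)), and ρ = 0 a.e. outside the ball B_R of radius R centered at the origin, one has ∫_{ℝ^N} |x−y|^{1−N} ρ(y) dy ≤ C₂ · (1 + log((|x|+R)/(|x|−R))) · |x|^{1−N} for all x ∈ ℝ^N with |x| > R. -/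
set_option maxHeartbeats 1000000

open MeasureTheory Finset ENNReal

noncomputable section

lemma exists_separated_points (N : ℕ) (hN : 2 ≤ N) (r t : ℝ) (hr : 0 < r) (ht : 0 < t)
    (m : ℕ) (hm : 0 < m) (hmr : 7 * t * ((m : ℝ) - 1) * N ≤ r / 2) :
    ∃ P : (Fin (N - 1) → Fin m) → EuclideanSpace ℝ (Fin N),
      (∀ s, ‖P s‖ = r) ∧ ∀ s s' : Fin (N - 1) → Fin m, s ≠ s' → 2 * t < dist (P s) (P s') := by
  haveI : NeZero N := ⟨by omega⟩
  have hns : ∀ w : EuclideanSpace ℝ (Fin N), ‖w‖ ^ 2 = ∑ j, (w j) ^ 2 := by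
    intro w
    rw [EuclideanSpace.norm_eq, Real.sq_sqrt (by positivity)]
    simp [Real.norm_eq_abs, sq_abs]
  set z : (Fin (N - 1) → Fin m) → EuclideanSpace ℝ (Fin N) := fun s =>
    (WithLp.equiv 2 (Fin N → ℝ)).symm
      (fun j => if h : (j : ℕ) = 0 then r else
        7 * t * ((s ⟨(j : ℕ) - 1, by have := j.2; omega⟩ : Fin m) : ℕ)) with hz
  have hcoord : ∀ s (j : Fin N), z s j = if h : (j : ℕ) = 0 then r else
      7 * t * ((s ⟨(j : ℕ) - 1, by have := j.2; omega⟩ : Fin m) : ℕ) := by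
    intro s j; rfl
  have hc0 : ∀ s, z s (0 : Fin N) = r := by
    intro s; rw [hcoord]; simp
  -- tail bound
  have htail : ∀ s, ∑ j ∈ univ \ {(0 : Fin N)}, (z s j) ^ 2 ≤ (r / 2) ^ 2 := by
    intro s
    have hA : (0:ℝ) ≤ 7 * t * ((m : ℝ) - 1) := by
      have : (1:ℝ) ≤ (m:ℝ) := by exact_mod_cast hm
      nlinarith
    have hstep : ∀ j ∈ univ \ {(0 : Fin N)}, (z s j) ^ 2 ≤ (7 * t * ((m : ℝ) - 1)) ^ 2 := by
      intro j hj
      simp only [mem_sdiff, mem_singleton] at hj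
      have hj0 : (j : ℕ) ≠ 0 := by
        intro h; exact hj.2 (Fin.ext (by simp [h]))
      rw [hcoord, dif_neg hj0]
      set c : ℝ := (((s ⟨(j : ℕ) - 1, by have := j.2; omega⟩ : Fin m) : ℕ) : ℝ) with hc
      have hc0' : (0:ℝ) ≤ c := by rw [hc]; positivity
      have hcle : c ≤ (m : ℝ) - 1 := by
        have h2 : ((s ⟨(j : ℕ) - 1, by have := j.2; omega⟩ : Fin m) : ℕ) + 1 ≤ m :=
          (s ⟨(j : ℕ) - 1, by have := j.2; omega⟩).2
        have : c + 1 ≤ (m:ℝ) := by rw [hc]; exact_mod_cast h2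
        linarith
      have hsq : c ^ 2 ≤ ((m:ℝ) - 1) ^ 2 := by nlinarith
      nlinarith [sq_nonneg t, mul_le_mul_of_nonneg_left hsq (by positivity : (0:ℝ) ≤ 49 * t^2)]
    calc ∑ j ∈ univ \ {(0 : Fin N)}, (z s j) ^ 2
        ≤ (univ \ {(0 : Fin N)}).card • (7 * t * ((m : ℝ) - 1)) ^ 2 :=
          Finset.sum_le_card_nsmul _ _ _ hstep
      _ = ((N : ℝ) - 1) * (7 * t * ((m : ℝ) - 1)) ^ 2 := by
          rw [Finset.card_sdiff_of_subset (by simp), Finset.card_singleton, Finset.card_univ,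
            Fintype.card_fin, nsmul_eq_mul]
          have : (1:ℕ) ≤ N := by omega
          push_cast [Nat.cast_sub this]; ring
      _ ≤ (r / 2) ^ 2 := by
          have h2 : (1:ℝ) ≤ (N:ℝ) := by exact_mod_cast (by omega : 1 ≤ N)
          have h1 : (0:ℝ) ≤ 7 * t * ((m : ℝ) - 1) := by
            have : (1:ℝ) ≤ (m:ℝ) := by exact_mod_cast hm
            nlinarith
          have h3 : (7 * t * ((m : ℝ) - 1) * N) ^ 2 ≤ (r/2) ^ 2 := by
            have h4 : (0:ℝ) ≤ 7 * t * ((m : ℝ) - 1) * N := by positivity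
            nlinarith
          have h5 : ((N:ℝ) - 1) * (7 * t * ((m : ℝ) - 1)) ^ 2
              ≤ (N:ℝ)^2 * (7 * t * ((m : ℝ) - 1)) ^ 2 := by
            apply mul_le_mul_of_nonneg_right _ (sq_nonneg _)
            nlinarith
          nlinarith
  have hnsq : ∀ s, ‖z s‖ ^ 2 = r ^ 2 + ∑ j ∈ univ \ {(0 : Fin N)}, (z s j) ^ 2 := by
    intro s
    rw [hns]
    rw [← Finset.sum_sdiff (Finset.subset_univ {(0 : Fin N)})]
    simp [hc0, add_comm]
  have hzlb : ∀ s, r ≤ ‖z s‖ := by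
    intro s
    have h1 := hnsq s
    have h2 : (0:ℝ) ≤ ∑ j ∈ univ \ {(0 : Fin N)}, (z s j) ^ 2 := by positivity
    nlinarith [norm_nonneg (z s)]
  have hzub : ∀ s, ‖z s‖ ≤ 3 / 2 * r := by
    intro s
    have h1 := hnsq s
    have h2 := htail s
    nlinarith [norm_nonneg (z s)]
  have hzpos : ∀ s, 0 < ‖z s‖ := fun s => lt_of_lt_of_le hr (hzlb s)
  have hsub : ∀ s s' (j : Fin N), (z s - z s') j = z s j - z s' j := by
    intro s s' j; rfl
  -- separation of the z's
  have hzsep : ∀ s s' : Fin (N - 1) → Fin m, s ≠ s' → 7 * t ≤ ‖z s - z s'‖ := by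
    intro s s' hss
    obtain ⟨i, hi⟩ := Function.ne_iff.1 hss
    set j : Fin N := ⟨(i : ℕ) + 1, by have := i.2; omega⟩ with hj
    have hj0 : (j : ℕ) ≠ 0 := by simp [hj]
    have hcast : (⟨(j : ℕ) - 1, by have := j.2; omega⟩ : Fin (N - 1)) = i := by
      apply Fin.ext; simp [hj]
    have hzj : z s j - z s' j = 7 * t * (((s i : ℕ) : ℝ) - ((s' i : ℕ) : ℝ)) := by
      rw [hcoord, hcoord, dif_neg hj0, dif_neg hj0, hcast]; ring
    have hone : (1:ℝ) ≤ (((s i : ℕ) : ℝ) - ((s' i : ℕ) : ℝ)) ^ 2 := by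
      have hne : (s i : ℕ) ≠ (s' i : ℕ) := fun h => hi (Fin.ext h)
      rcases lt_or_gt_of_ne hne with h | h
      · have : ((s i : ℕ) : ℝ) + 1 ≤ ((s' i : ℕ) : ℝ) := by exact_mod_cast h
        nlinarith
      · have : ((s' i : ℕ) : ℝ) + 1 ≤ ((s i : ℕ) : ℝ) := by exact_mod_cast h
        nlinarith
    have hterm : (7 * t) ^ 2 ≤ (z s j - z s' j) ^ 2 := by
      rw [hzj]
      calc (7*t)^2 = (7*t)^2 * 1 := by ring
        _ ≤ (7*t)^2 * (((s i : ℕ) : ℝ) - ((s' i : ℕ) : ℝ)) ^ 2 :=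
            mul_le_mul_of_nonneg_left hone (by positivity)
        _ = (7 * t * (((s i : ℕ) : ℝ) - ((s' i : ℕ) : ℝ))) ^ 2 := by ring
    have hsum : (7 * t) ^ 2 ≤ ‖z s - z s'‖ ^ 2 := by
      rw [hns (z s - z s')]
      calc (7*t)^2 ≤ ((z s - z s') j) ^ 2 := by rw [hsub]; exact hterm
        _ ≤ ∑ k, ((z s - z s') k) ^ 2 :=
            Finset.single_le_sum (f := fun k => ((z s - z s') k) ^ 2)
              (fun k _ => sq_nonneg _) (Finset.mem_univ j)
    nlinarith [norm_nonneg (z s - z s'), ht.le]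
  -- norm difference bound
  have hnormdiff : ∀ s s' : Fin (N - 1) → Fin m, |‖z s‖ - ‖z s'‖| ≤ ‖z s - z s'‖ / 2 := by
    intro s s'
    have hCS := Finset.sum_mul_sq_le_sq_mul_sq (univ \ {(0 : Fin N)})
      (fun j => z s j - z s' j) (fun j => z s j + z s' j)
    have hA : ∑ j ∈ univ \ {(0 : Fin N)}, (z s j - z s' j) ^ 2 ≤ ‖z s - z s'‖ ^ 2 := by
      have h1 : ∑ j ∈ univ \ {(0 : Fin N)}, (z s j - z s' j) ^ 2
          ≤ ∑ j ∈ (univ : Finset (Fin N)), (z s j - z s' j) ^ 2 :=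
        Finset.sum_le_sum_of_subset_of_nonneg (Finset.subset_univ _) (fun j _ _ => sq_nonneg _)
      have h2 : ∑ j ∈ (univ : Finset (Fin N)), (z s j - z s' j) ^ 2 = ‖z s - z s'‖ ^ 2 := by
        rw [hns (z s - z s')]
        exact Finset.sum_congr rfl (fun j _ => by rw [hsub])
      linarith
    have hB : ∑ j ∈ univ \ {(0 : Fin N)}, (z s j + z s' j) ^ 2 ≤ r ^ 2 := by
      have hstep : ∀ j ∈ univ \ {(0 : Fin N)}, (z s j + z s' j) ^ 2
          ≤ 2 * (z s j)^2 + 2 * (z s' j)^2 := by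
        intro j _; nlinarith [sq_nonneg (z s j - z s' j)]
      calc ∑ j ∈ univ \ {(0 : Fin N)}, (z s j + z s' j) ^ 2
          ≤ ∑ j ∈ univ \ {(0 : Fin N)}, (2 * (z s j)^2 + 2 * (z s' j)^2) :=
            Finset.sum_le_sum hstep
        _ = 2 * (∑ j ∈ univ \ {(0 : Fin N)}, (z s j)^2)
            + 2 * (∑ j ∈ univ \ {(0 : Fin N)}, (z s' j)^2) := by
            rw [Finset.sum_add_distrib, Finset.mul_sum, Finset.mul_sum]
        _ ≤ 2 * (r/2)^2 + 2 * (r/2)^2 := by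
            have := htail s; have := htail s'; linarith
        _ ≤ r ^ 2 := by nlinarith
    have hdiffsq : ‖z s‖^2 - ‖z s'‖^2
        = ∑ j ∈ univ \ {(0 : Fin N)}, (z s j - z s' j) * (z s j + z s' j) := by
      calc ‖z s‖^2 - ‖z s'‖^2
          = (∑ j ∈ univ \ {(0 : Fin N)}, (z s j)^2)
            - (∑ j ∈ univ \ {(0 : Fin N)}, (z s' j)^2) := by
            rw [hnsq s, hnsq s']; ring
        _ = ∑ j ∈ univ \ {(0 : Fin N)}, ((z s j)^2 - (z s' j)^2) :=
            (Finset.sum_sub_distrib _ _).symm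
        _ = ∑ j ∈ univ \ {(0 : Fin N)}, (z s j - z s' j) * (z s j + z s' j) :=
            Finset.sum_congr rfl (fun j _ => by ring)
    have habs : |‖z s‖^2 - ‖z s'‖^2| ≤ ‖z s - z s'‖ * r := by
      have h1 : (‖z s‖^2 - ‖z s'‖^2)^2 ≤ ‖z s - z s'‖^2 * r^2 := by
        rw [hdiffsq]
        exact le_trans hCS (mul_le_mul hA hB (by positivity) (sq_nonneg _))
      have h2 : (0:ℝ) ≤ ‖z s - z s'‖ * r := mul_nonneg (norm_nonneg _) hr.le
      nlinarith [abs_nonneg (‖z s‖^2 - ‖z s'‖^2), sq_abs (‖z s‖^2 - ‖z s'‖^2)]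
    have hfact : |‖z s‖ - ‖z s'‖| * (‖z s‖ + ‖z s'‖) = |‖z s‖^2 - ‖z s'‖^2| := by
      rw [← abs_of_nonneg (show (0:ℝ) ≤ ‖z s‖ + ‖z s'‖ by positivity), ← abs_mul]
      congr 1; ring
    have h2r : 2*r ≤ ‖z s‖ + ‖z s'‖ := by linarith [hzlb s, hzlb s']
    nlinarith [abs_nonneg (‖z s‖ - ‖z s'‖), norm_nonneg (z s - z s'),
      mul_le_mul_of_nonneg_left h2r (abs_nonneg (‖z s‖ - ‖z s'‖))]
  -- the projected points
  refine ⟨fun s => (r / ‖z s‖) • z s, ?_, ?_⟩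
  · intro s
    rw [norm_smul, Real.norm_eq_abs, abs_of_nonneg (le_of_lt (div_pos hr (hzpos s))),
      div_mul_cancel₀ _ (ne_of_gt (hzpos s))]
  · intro s s' hss
    rw [dist_eq_norm]
    set D := ‖(r / ‖z s‖) • z s - (r / ‖z s'‖) • z s'‖ with hD
    have hDnn : 0 ≤ D := norm_nonneg _
    have key : z s - (‖z s‖/‖z s'‖) • z s'
        = (‖z s‖/r) • ((r / ‖z s‖) • z s - (r / ‖z s'‖) • z s') := by
      rw [smul_sub, smul_smul, smul_smul]
      have e1 : ‖z s‖/r * (r / ‖z s‖) = 1 := by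
        rw [div_mul_div_comm, mul_comm (‖z s‖) r]
        exact div_self (ne_of_gt (mul_pos hr (hzpos s)))
      have e2 : ‖z s‖/r * (r / ‖z s'‖) = ‖z s‖/‖z s'‖ := by
        rw [div_mul_div_comm]
        rw [mul_comm (‖z s‖) r, mul_div_mul_left _ _ (ne_of_gt hr)]
      rw [e1, e2, one_smul]
    have h1 : ‖z s - (‖z s‖/‖z s'‖) • z s'‖ = (‖z s‖/r) * D := by
      rw [key, norm_smul, Real.norm_eq_abs, abs_of_nonneg (le_of_lt (div_pos (hzpos s) hr))]
    have h2 : ‖(‖z s‖/‖z s'‖) • z s' - z s'‖ = |‖z s‖ - ‖z s'‖| := by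
      have e3 : (‖z s‖/‖z s'‖) • z s' - z s' = ((‖z s‖ - ‖z s'‖)/‖z s'‖) • z s' := by
        rw [sub_div, div_self (ne_of_gt (hzpos s')), sub_smul, one_smul]
      rw [e3, norm_smul, Real.norm_eq_abs, abs_div,
        abs_of_nonneg (norm_nonneg (z s'))]
      rw [div_mul_cancel₀ _ (ne_of_gt (hzpos s'))]
    have htri : ‖z s - z s'‖ ≤ (‖z s‖/r) * D + |‖z s‖ - ‖z s'‖| := by
      calc ‖z s - z s'‖
          = ‖(z s - (‖z s‖/‖z s'‖) • z s') + ((‖z s‖/‖z s'‖) • z s' - z s')‖ := by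
            congr 1; abel
        _ ≤ ‖z s - (‖z s‖/‖z s'‖) • z s'‖ + ‖(‖z s‖/‖z s'‖) • z s' - z s'‖ :=
            norm_add_le _ _
        _ = (‖z s‖/r) * D + |‖z s‖ - ‖z s'‖| := by rw [h1, h2]
    have h3 : (‖z s‖/r) * D ≤ (3/2) * D := by
      apply mul_le_mul_of_nonneg_right _ hDnn
      rw [div_le_iff₀ hr]
      linarith [hzub s]
    have hsep := hzsep s s' hss
    have hnd := hnormdiff s s'
    linarith


lemma lintegral_ball_transport {N : ℕ} (ρ : EuclideanSpace ℝ (Fin N) → ℝ)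
    (hmeas : Measurable ρ) (f : ℝ → ℝ) (hrad : ∀ y, ρ y = f ‖y‖)
    (x p : EuclideanSpace ℝ (Fin N)) (hxp : ‖x‖ = ‖p‖) (t : ℝ) :
    ∫⁻ y in Metric.closedBall p t, ENNReal.ofReal (ρ y)
      = ∫⁻ y in Metric.closedBall x t, ENNReal.ofReal (ρ y) := by
  obtain ⟨Q, hQ⟩ : ∃ Q : EuclideanSpace ℝ (Fin N) ≃ₗᵢ[ℝ] EuclideanSpace ℝ (Fin N), Q x = p :=
    ⟨Submodule.reflection (ℝ ∙ (x - p))ᗮ, Submodule.reflection_sub hxp⟩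
  have hQmp : MeasurePreserving Q volume volume := Q.measurePreserving
  have hmeas' : Measurable fun y => ENNReal.ofReal (ρ y) := hmeas.ennreal_ofReal
  rw [← lintegral_indicator measurableSet_closedBall, ← lintegral_indicator measurableSet_closedBall]
  rw [← hQmp.lintegral_comp (hmeas'.indicator measurableSet_closedBall)]
  congr 1
  funext y
  have hmem : Q y ∈ Metric.closedBall p t ↔ y ∈ Metric.closedBall x t := by
    rw [Metric.mem_closedBall, Metric.mem_closedBall, ← hQ, Q.dist_map]
  have hval : ρ (Q y) = ρ y := by rw [hrad, hrad, Q.norm_map]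
  by_cases hy : y ∈ Metric.closedBall x t
  · rw [Set.indicator_of_mem (hmem.2 hy), Set.indicator_of_mem hy, hval]
  · rw [Set.indicator_of_notMem (fun h => hy (hmem.1 h)), Set.indicator_of_notMem hy]

lemma cap_bound {N : ℕ} (hN : 2 ≤ N) (ρ : EuclideanSpace ℝ (Fin N) → ℝ)
    (hmeas : Measurable ρ) (f : ℝ → ℝ) (hrad : ∀ y, ρ y = f ‖y‖)
    (hmass : ∫⁻ y, ENNReal.ofReal (ρ y) ≤ 1)
    (x : EuclideanSpace ℝ (Fin N)) (hx : 0 < ‖x‖) (t : ℝ) (ht : 0 < t) :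
    ∫⁻ y in Metric.closedBall x t, ENNReal.ofReal (ρ y)
      ≤ ENNReal.ofReal ((14 * N * t / ‖x‖) ^ (N - 1)) := by
  have hNpos : (0:ℝ) < (N:ℝ) := by exact_mod_cast (by omega : 0 < N)
  set r := ‖x‖ with hrdef
  set q : ℝ := r / (14 * N * t) with hq
  have hqpos : 0 < q := by
    rw [hq]
    exact div_pos hx (mul_pos (mul_pos (by norm_num) hNpos) ht)
  set m : ℕ := ⌊q⌋₊ + 1 with hm
  have hmq : q ≤ (m:ℝ) := by
    push_cast [hm]
    linarith [Nat.lt_floor_add_one q]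
  have hm1 : ((m:ℝ) - 1) ≤ q := by
    push_cast [hm]
    linarith [Nat.floor_le hqpos.le]
  have hm1nn : (0:ℝ) ≤ (m:ℝ) - 1 := by
    have : (1:ℝ) ≤ (m:ℝ) := by exact_mod_cast (by omega : 1 ≤ m)
    linarith
  have hmr : 7 * t * ((m : ℝ) - 1) * N ≤ r / 2 := by
    have h1 : 7 * t * ((m:ℝ) - 1) * N ≤ 7 * t * q * N := by
      have := mul_le_mul_of_nonneg_left hm1 (by linarith : (0:ℝ) ≤ 7 * t)
      exact mul_le_mul_of_nonneg_right this hNpos.le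
    have h2 : 7 * t * q * N = r / 2 := by
      rw [hq]; field_simp; ring
    linarith
  obtain ⟨P, hPnorm, hPsep⟩ := exists_separated_points N hN r t hx ht m (Nat.succ_pos _) hmr
  set μ := volume.withDensity (fun y => ENNReal.ofReal (ρ y)) with hμ
  have happ : ∀ (p : EuclideanSpace ℝ (Fin N)) (t' : ℝ),
      μ (Metric.closedBall p t') = ∫⁻ y in Metric.closedBall p t', ENNReal.ofReal (ρ y) :=
    fun p t' => withDensity_apply _ measurableSet_closedBall
  have huniv : μ Set.univ ≤ 1 := by
    rw [hμ, withDensity_apply _ MeasurableSet.univ, Measure.restrict_univ]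
    exact hmass
  have hdisj : Set.PairwiseDisjoint
      ((Finset.univ : Finset (Fin (N-1) → Fin m)) : Set (Fin (N-1) → Fin m))
      (fun s => Metric.closedBall (P s) t) := by
    intro s _ s' _ hss
    apply Metric.closedBall_disjoint_closedBall
    have := hPsep s s' hss
    linarith
  have hsum : ∑ s : (Fin (N-1) → Fin m), μ (Metric.closedBall (P s) t) ≤ 1 := by
    rw [← measure_biUnion_finset hdisj (fun s _ => measurableSet_closedBall)]
    exact le_trans (measure_mono (Set.subset_univ _)) huniv
  have hsame : ∀ s, μ (Metric.closedBall (P s) t) = μ (Metric.closedBall x t) := by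
    intro s
    rw [happ, happ]
    exact lintegral_ball_transport ρ hmeas f hrad x (P s) (hPnorm s).symm t
  have hcardsum : (m ^ (N-1) : ℕ) • μ (Metric.closedBall x t) ≤ 1 := by
    have : ∑ s : (Fin (N-1) → Fin m), μ (Metric.closedBall (P s) t)
        = (m ^ (N-1) : ℕ) • μ (Metric.closedBall x t) := by
      rw [Finset.sum_congr rfl (fun s _ => hsame s), Finset.sum_const, Finset.card_univ]
      congr 1
      simp [Fintype.card_fun]
    rw [← this]; exact hsum
  have hfin : μ (Metric.closedBall x t) ≤ ((m ^ (N-1) : ℕ) : ℝ≥0∞)⁻¹ := by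
    rw [ENNReal.le_inv_iff_mul_le]
    rw [nsmul_eq_mul, mul_comm] at hcardsum
    exact hcardsum
  have hmpos : (0:ℝ) < (m:ℝ) := by
    push_cast [hm]; positivity
  calc ∫⁻ y in Metric.closedBall x t, ENNReal.ofReal (ρ y)
      = μ (Metric.closedBall x t) := (happ x t).symm
    _ ≤ ((m ^ (N-1) : ℕ) : ℝ≥0∞)⁻¹ := hfin
    _ = ENNReal.ofReal ((1/(m:ℝ)) ^ (N-1)) := by
        rw [ENNReal.ofReal_pow (by positivity)]
        rw [one_div, ENNReal.ofReal_inv_of_pos hmpos, ENNReal.ofReal_natCast,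
          ← ENNReal.inv_pow, Nat.cast_pow]
    _ ≤ ENNReal.ofReal ((14 * N * t / r) ^ (N - 1)) := by
        apply ENNReal.ofReal_le_ofReal
        apply pow_le_pow_left₀ (by positivity)
        rw [div_le_div_iff₀ hmpos hx]
        have h6 : r = 14 * N * t * q := by
          rw [hq]; field_simp
        have h7 := mul_le_mul_of_nonneg_left hmq
          (le_of_lt (mul_pos (mul_pos (by norm_num : (0:ℝ) < 14) hNpos) ht))
        nlinarith


lemma rpow_one_sub_nat (c : ℝ) (hc : 0 ≤ c) (N : ℕ) (hN : 2 ≤ N) :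
    c ^ (1 - (N : ℝ)) = (c ^ (N - 1))⁻¹ := by
  have hN1 : ((N - 1 : ℕ) : ℝ) = (N : ℝ) - 1 := by
    rw [Nat.cast_sub (by omega : 1 ≤ N), Nat.cast_one]
  rcases eq_or_lt_of_le hc with h0 | hpos
  · rw [← h0]
    have hNR : (2:ℝ) ≤ (N:ℝ) := by exact_mod_cast hN
    rw [Real.zero_rpow (by intro h; linarith : 1 - (N:ℝ) ≠ 0), zero_pow (by omega : N - 1 ≠ 0)]
    norm_num
  · have hexp : (1 - (N : ℝ)) = -((N - 1 : ℕ) : ℝ) := by rw [hN1]; ring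
    rw [hexp, Real.rpow_neg hc, Real.rpow_natCast]

/-- Riesz potential estimate outside the support for radially symmetric compactly
supported probability densities, in the borderline case `k = 1-N`. -/
theorem riesz_potential_estimate_borderline (N : ℕ) (hN : 2 ≤ N) :
    ∃ C₂ : ℝ, 0 < C₂ ∧
      ∀ R : ℝ, 0 < R →
      ∀ ρ : EuclideanSpace ℝ (Fin N) → ℝ, Measurable ρ →
        (∀ᵐ x ∂volume, 0 ≤ ρ x) → (∫ x, ρ x) = 1 →
        (∃ f : ℝ → ℝ, (∀ r ∈ Set.Ici (0 : ℝ), 0 ≤ f r) ∧ ∀ x, ρ x = f ‖x‖) →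
        (∀ᵐ x ∂volume, x ∉ Metric.closedBall (0 : EuclideanSpace ℝ (Fin N)) R → ρ x = 0) →
        ∀ x : EuclideanSpace ℝ (Fin N), R < ‖x‖ →
          (∫ y, ‖x - y‖ ^ (1 - (N : ℝ)) * ρ y) ≤
            C₂ * (1 + Real.log ((‖x‖ + R) / (‖x‖ - R))) * ‖x‖ ^ (1 - (N : ℝ)) := by
  have hNR : (0:ℝ) < (N:ℝ) := by exact_mod_cast (by omega : 0 < N)
  have hlog2 : 0 < Real.log 2 := Real.log_pos (by norm_num)
  have hlog2' : Real.log 2 ≤ 1 := by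
    have := Real.add_one_le_exp (Real.log 2)
    nlinarith [Real.exp_log (show (0:ℝ) < 2 by norm_num), Real.log_nonneg (show (1:ℝ) ≤ 2 by norm_num)]
  refine ⟨(28 * N) ^ (N - 1) / Real.log 2, by positivity, ?_⟩
  intro R hR ρ hmeas hpos hint hradex hsupp x hx
  obtain ⟨f, hf0, hfeq⟩ := hradex
  set r := ‖x‖ with hrdef
  have hr : 0 < r := lt_trans hR hx
  have hrR : 0 < r - R := by linarith
  have hratio0 : 0 < (r + R)/(r - R) := div_pos (by linarith) hrR
  have hratio1 : 1 ≤ (r + R)/(r - R) := by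
    rw [le_div_iff₀ hrR]; linarith
  set L := Real.log ((r + R) / (r - R)) with hL
  have hL0 : 0 ≤ L := Real.log_nonneg hratio1
  -- mass
  have hint' : Integrable ρ := by
    by_contra h
    rw [integral_undef h] at hint; norm_num at hint
  have hmass : ∫⁻ y, ENNReal.ofReal (ρ y) = 1 := by
    rw [← ofReal_integral_eq_lintegral_ofReal hint' hpos, hint, ENNReal.ofReal_one]
  -- the dyadic scale count
  set J : ℕ := ⌊Real.logb 2 ((r + R) / (r - R))⌋₊ with hJ
  have hJup : r + R < 2 ^ (J + 1) * (r - R) := by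
    have hlt : Real.logb 2 ((r + R) / (r - R)) < (J : ℝ) + 1 := Nat.lt_floor_add_one _
    have h2 : (r + R)/(r - R) < (2:ℝ) ^ ((J:ℝ) + 1) := by
      calc (r + R)/(r - R) = (2:ℝ) ^ Real.logb 2 ((r + R)/(r - R)) :=
            (Real.rpow_logb (by norm_num) (by norm_num) hratio0).symm
        _ < (2:ℝ) ^ ((J:ℝ) + 1) := by
            exact (Real.rpow_lt_rpow_left_iff (by norm_num : (1:ℝ) < 2)).2 hlt
    have h3 : (2:ℝ) ^ ((J:ℝ) + 1) = 2 ^ (J + 1) := by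
      rw [← Real.rpow_natCast 2 (J + 1)]; push_cast; ring_nf
    rw [h3] at h2
    rw [div_lt_iff₀ hrR] at h2
    linarith
  have hJle : (J : ℝ) + 1 ≤ (1 + L) / Real.log 2 := by
    have h1 : (J : ℝ) ≤ Real.logb 2 ((r + R)/(r - R)) :=
      Nat.floor_le (Real.logb_nonneg (by norm_num) hratio1)
    rw [Real.logb] at h1
    rw [le_div_iff₀ hlog2]
    have h2 : (J:ℝ) * Real.log 2 ≤ L := by
      have := mul_le_mul_of_nonneg_right h1 hlog2.le
      rwa [div_mul_cancel₀ _ (ne_of_gt hlog2)] at this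
    nlinarith
  -- the annuli
  set A : ℕ → Set (EuclideanSpace ℝ (Fin N)) := fun j =>
    (fun y => ‖x - y‖) ⁻¹' (Set.Ico ((2:ℝ)^j * (r - R)) ((2:ℝ)^(j+1) * (r - R))) with hA
  have hnormmeas : Measurable (fun y : EuclideanSpace ℝ (Fin N) => ‖x - y‖) :=
    (measurable_const.sub measurable_id).norm
  have hAmeas : ∀ j, MeasurableSet (A j) := fun j => hnormmeas measurableSet_Ico
  -- rewrite the kernel
  have hKconv : ∀ y : EuclideanSpace ℝ (Fin N),
      ‖x - y‖ ^ (1 - (N : ℝ)) = (‖x - y‖ ^ (N - 1))⁻¹ := fun y =>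
    rpow_one_sub_nat _ (norm_nonneg _) N hN
  have hKmeas : Measurable (fun y : EuclideanSpace ℝ (Fin N) => (‖x - y‖ ^ (N - 1))⁻¹) :=
    (hnormmeas.pow_const _).inv
  -- constants
  set χ : ℕ → ℝ≥0∞ := fun j => ENNReal.ofReal ((((2:ℝ)^j * (r - R)) ^ (N - 1))⁻¹) with hχ
  -- pointwise a.e. bound
  have hae : ∀ᵐ y ∂(volume : Measure (EuclideanSpace ℝ (Fin N))),
      ENNReal.ofReal ((‖x - y‖ ^ (N - 1))⁻¹ * ρ y) ≤
      ∑ j ∈ Finset.range (J + 1), (A j).indicator (fun _ => χ j) y * ENNReal.ofReal (ρ y) := by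
    filter_upwards [hpos, hsupp] with y hy1 hy2
    rcases eq_or_lt_of_le hy1 with h0 | hρpos
    · rw [← h0, mul_zero, ENNReal.ofReal_zero]
      exact zero_le
    · have hyR : y ∈ Metric.closedBall (0 : EuclideanSpace ℝ (Fin N)) R := by
        by_contra hc
        exact (ne_of_gt hρpos) (hy2 hc)
      have hyn : ‖y‖ ≤ R := by
        rw [Metric.mem_closedBall, dist_zero_right] at hyR; exact hyR
      have hd1 : r - R ≤ ‖x - y‖ := by
        have := norm_sub_norm_le x y
        linarith
      have hd2 : ‖x - y‖ ≤ r + R := by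
        have := norm_sub_le x y
        linarith
      set d := ‖x - y‖ with hd
      have hdpos : 0 < d := lt_of_lt_of_le hrR hd1
      have hq1 : 1 ≤ d / (r - R) := (one_le_div hrR).2 hd1
      have hqq0 : 0 < d / (r - R) := div_pos hdpos hrR
      set j₀ : ℕ := ⌊Real.logb 2 (d / (r - R))⌋₊ with hj₀
      have hlogb0 : 0 ≤ Real.logb 2 (d / (r - R)) := Real.logb_nonneg (by norm_num) hq1
      have hlow : (2:ℝ)^j₀ * (r - R) ≤ d := by
        have h1 : (2:ℝ) ^ ((j₀:ℝ)) ≤ d / (r - R) := by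
          calc (2:ℝ) ^ ((j₀:ℝ)) ≤ (2:ℝ) ^ Real.logb 2 (d / (r - R)) :=
                (Real.rpow_le_rpow_left_iff (by norm_num : (1:ℝ) < 2)).2 (Nat.floor_le hlogb0)
            _ = d / (r - R) := Real.rpow_logb (by norm_num) (by norm_num) hqq0
        rw [Real.rpow_natCast] at h1
        rw [← le_div_iff₀ hrR]
        exact h1
      have hhigh : d < (2:ℝ)^(j₀+1) * (r - R) := by
        have h1 : d / (r - R) < (2:ℝ) ^ ((j₀:ℝ) + 1) := by
          calc d / (r - R) = (2:ℝ) ^ Real.logb 2 (d / (r - R)) :=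
                (Real.rpow_logb (by norm_num) (by norm_num) hqq0).symm
            _ < (2:ℝ) ^ ((j₀:ℝ) + 1) :=
                (Real.rpow_lt_rpow_left_iff (by norm_num : (1:ℝ) < 2)).2 (Nat.lt_floor_add_one _)
        have h3 : (2:ℝ) ^ ((j₀:ℝ) + 1) = 2 ^ (j₀ + 1) := by
          rw [← Real.rpow_natCast 2 (j₀ + 1)]; push_cast; ring_nf
        rw [h3] at h1
        rw [div_lt_iff₀ hrR] at h1
        linarith
      have hjJ : j₀ ∈ Finset.range (J + 1) := by
        rw [Finset.mem_range]
        have h2 : (2:ℝ)^j₀ * (r - R) < 2 ^ (J + 1) * (r - R) :=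
          lt_of_le_of_lt (le_trans hlow hd2) hJup
        have h3 : (2:ℝ)^j₀ < 2 ^ (J + 1) := lt_of_mul_lt_mul_right h2 hrR.le
        exact (pow_lt_pow_iff_right₀ (by norm_num : (1:ℝ) < 2)).1 h3
      have hmemA : y ∈ A j₀ := by
        rw [hA]
        exact ⟨hlow, hhigh⟩
      have hKle : (d ^ (N - 1))⁻¹ ≤ (((2:ℝ)^j₀ * (r - R)) ^ (N - 1))⁻¹ := by
        apply inv_anti₀ (by positivity)
        exact pow_le_pow_left₀ (by positivity) hlow _
      calc ENNReal.ofReal ((d ^ (N - 1))⁻¹ * ρ y)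
          = ENNReal.ofReal ((d ^ (N - 1))⁻¹) * ENNReal.ofReal (ρ y) :=
            ENNReal.ofReal_mul (by positivity)
        _ ≤ χ j₀ * ENNReal.ofReal (ρ y) := by
            exact mul_le_mul_left (ENNReal.ofReal_le_ofReal hKle) _
        _ = (A j₀).indicator (fun _ => χ j₀) y * ENNReal.ofReal (ρ y) := by
            rw [Set.indicator_of_mem hmemA]
        _ ≤ ∑ j ∈ Finset.range (J + 1), (A j).indicator (fun _ => χ j) y
              * ENNReal.ofReal (ρ y) :=
            Finset.single_le_sum
              (f := fun j => (A j).indicator (fun _ => χ j) y * ENNReal.ofReal (ρ y))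
              (fun j _ => zero_le) hjJ
  -- integrate the bound
  have hsummeas : ∀ j ∈ Finset.range (J + 1),
      Measurable (fun y => (A j).indicator (fun _ => χ j) y * ENNReal.ofReal (ρ y)) :=
    fun j _ => ((measurable_const.indicator (hAmeas j)).mul hmeas.ennreal_ofReal)
  have hintbound : ∫⁻ y, ENNReal.ofReal ((‖x - y‖ ^ (N - 1))⁻¹ * ρ y) ≤
      ∑ j ∈ Finset.range (J + 1), χ j * ∫⁻ y in A j, ENNReal.ofReal (ρ y) := by
    calc ∫⁻ y, ENNReal.ofReal ((‖x - y‖ ^ (N - 1))⁻¹ * ρ y)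
        ≤ ∫⁻ y, ∑ j ∈ Finset.range (J + 1),
            (A j).indicator (fun _ => χ j) y * ENNReal.ofReal (ρ y) := lintegral_mono_ae hae
      _ = ∑ j ∈ Finset.range (J + 1), ∫⁻ y,
            (A j).indicator (fun _ => χ j) y * ENNReal.ofReal (ρ y) :=
          lintegral_finset_sum _ hsummeas
      _ = ∑ j ∈ Finset.range (J + 1), χ j * ∫⁻ y in A j, ENNReal.ofReal (ρ y) := by
          apply Finset.sum_congr rfl
          intro j _
          have heq : ∀ y, (A j).indicator (fun _ => χ j) y * ENNReal.ofReal (ρ y)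
              = (A j).indicator (fun y => χ j * ENNReal.ofReal (ρ y)) y := by
            intro y
            by_cases hy : y ∈ A j
            · rw [Set.indicator_of_mem hy, Set.indicator_of_mem hy]
            · rw [Set.indicator_of_notMem hy, Set.indicator_of_notMem hy, zero_mul]
          simp_rw [heq]
          rw [lintegral_indicator (hAmeas j), lintegral_const_mul _ hmeas.ennreal_ofReal]
  -- cap bound per scale
  have hAsub : ∀ j, A j ⊆ Metric.closedBall x ((2:ℝ)^(j+1) * (r - R)) := by
    intro j y hy
    rw [hA] at hy
    rw [Metric.mem_closedBall, dist_comm, dist_eq_norm]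
    exact le_of_lt hy.2
  have hcap : ∀ j, ∫⁻ y in A j, ENNReal.ofReal (ρ y)
      ≤ ENNReal.ofReal ((14 * N * ((2:ℝ)^(j+1) * (r - R)) / r) ^ (N - 1)) := by
    intro j
    refine le_trans (lintegral_mono_set (hAsub j)) ?_
    exact cap_bound hN ρ hmeas f hfeq (le_of_eq hmass) x hr _ (by positivity)
  -- combine each term
  have hterm : ∀ j, χ j * ENNReal.ofReal ((14 * N * ((2:ℝ)^(j+1) * (r - R)) / r) ^ (N - 1))
      = ENNReal.ofReal ((28 * N / r) ^ (N - 1)) := by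
    intro j
    rw [hχ, ← ENNReal.ofReal_mul (by positivity)]
    congr 1
    have hb : (0:ℝ) < (2:ℝ)^j * (r - R) := by positivity
    rw [inv_mul_eq_div, ← div_pow]
    congr 1
    field_simp
    ring
  -- total bound
  have htotal : ∫⁻ y, ENNReal.ofReal ((‖x - y‖ ^ (N - 1))⁻¹ * ρ y) ≤
      ENNReal.ofReal (((J:ℝ) + 1) * (28 * N / r) ^ (N - 1)) := by
    refine le_trans hintbound ?_
    calc ∑ j ∈ Finset.range (J + 1), χ j * ∫⁻ y in A j, ENNReal.ofReal (ρ y)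
        ≤ ∑ j ∈ Finset.range (J + 1), ENNReal.ofReal ((28 * N / r) ^ (N - 1)) := by
          apply Finset.sum_le_sum
          intro j _
          rw [← hterm j]
          exact mul_le_mul_right (hcap j) _
      _ = ((J + 1 : ℕ) : ℝ≥0∞) * ENNReal.ofReal ((28 * N / r) ^ (N - 1)) := by
          rw [Finset.sum_const, Finset.card_range, nsmul_eq_mul]
      _ = ENNReal.ofReal (((J:ℝ) + 1) * (28 * N / r) ^ (N - 1)) := by
          rw [ENNReal.ofReal_mul (by positivity : (0:ℝ) ≤ (J:ℝ) + 1)]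
          congr 1
          rw [← ENNReal.ofReal_natCast (J + 1)]
          congr 1
          push_cast
          ring
  -- compare constants
  have hrpow : r ^ (1 - (N:ℝ)) = (r ^ (N - 1))⁻¹ := rpow_one_sub_nat r hr.le N hN
  have hfinal : ((J:ℝ) + 1) * (28 * N / r) ^ (N - 1) ≤
      (28 * N) ^ (N - 1) / Real.log 2 * (1 + L) * r ^ (1 - (N:ℝ)) := by
    rw [hrpow, div_pow]
    have h1 : (0:ℝ) ≤ (28 * (N:ℝ)) ^ (N - 1) / r ^ (N - 1) := by positivity
    have h2 := mul_le_mul_of_nonneg_right hJle h1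
    calc ((J:ℝ) + 1) * ((28 * (N:ℝ)) ^ (N - 1) / r ^ (N - 1)) ≤
        (1 + L) / Real.log 2 * ((28 * (N:ℝ)) ^ (N - 1) / r ^ (N - 1)) := h2
      _ = (28 * (N:ℝ)) ^ (N - 1) / Real.log 2 * (1 + L) * (r ^ (N - 1))⁻¹ := by
          field_simp
  -- back to the Bochner integral
  have hRHSnn : 0 ≤ (28 * (N:ℝ)) ^ (N - 1) / Real.log 2 * (1 + L) * r ^ (1 - (N:ℝ)) := by
    have : (0:ℝ) ≤ r ^ (1 - (N:ℝ)) := Real.rpow_nonneg hr.le _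
    have h1 : (0:ℝ) ≤ (28 * (N:ℝ)) ^ (N - 1) / Real.log 2 := by positivity
    exact mul_nonneg (mul_nonneg h1 (by linarith)) this
  have haemeas : AEStronglyMeasurable (fun y => (‖x - y‖ ^ (N - 1))⁻¹ * ρ y)
      (volume : Measure (EuclideanSpace ℝ (Fin N))) :=
    (hKmeas.mul hmeas).aestronglyMeasurable
  have haenn : (0 : EuclideanSpace ℝ (Fin N) → ℝ)
      ≤ᵐ[(volume : Measure (EuclideanSpace ℝ (Fin N)))]
      (fun y => (‖x - y‖ ^ (N - 1))⁻¹ * ρ y) := by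
    filter_upwards [hpos] with y hy
    exact mul_nonneg (by positivity) hy
  calc ∫ y, ‖x - y‖ ^ (1 - (N : ℝ)) * ρ y
      = ∫ y, (‖x - y‖ ^ (N - 1))⁻¹ * ρ y := by
        apply integral_congr_ae
        filter_upwards with y
        rw [hKconv y]
    _ = (∫⁻ y, ENNReal.ofReal ((‖x - y‖ ^ (N - 1))⁻¹ * ρ y)).toReal :=
        integral_eq_lintegral_of_nonneg_ae haenn haemeas
    _ ≤ (28 * N) ^ (N - 1) / Real.log 2 * (1 + L) * r ^ (1 - (N:ℝ)) := by
        apply ENNReal.toReal_le_of_le_ofReal hRHSnn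
        exact le_trans htotal (ENNReal.ofReal_le_ofReal hfinal)
end
end

section
/- Let N ≥ 1, k ∈ (−N, 0), and let ρ : ℝ^N → ℝ be measurable with ρ ≥ 0 a.e., ∫_{ℝ^N} ρ = 1, and radially symmetric non-increasing (ρ(x) = f(|x|) for some non-increasing f : [0,∞) → [0,∞)). Then: (a) the Riesz potential (|·|^k ∗ ρ)(x) = ∫_{ℝ^N} |x−y|^k ρ(y) dy tends to 0 as |x| → ∞; and (b) its decay is not faster than |x|^k, namely ∫_{B_1} ρ(y) dy > 0 and (|·|^k ∗ ρ)(x) ≥ (|x|+1)^k ∫_{B_1} ρ(y) dy for all x ∈ ℝ^N, where B_1 is the unit ball centered at the origin. -/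
open MeasureTheory Filter Set Metric
open scoped ENNReal

noncomputable section

lemma riesz_aux_kernel_integrable {N : ℕ} (hN : 1 ≤ N) {k : ℝ}
    (hk₁ : -(N : ℝ) < k) (hk₂ : k < 0) (R : ℝ) :
    IntegrableOn (fun z : EuclideanSpace ℝ (Fin N) => ‖z‖ ^ k) (ball 0 R) volume := by
  have hmeas : Measurable fun z : EuclideanSpace ℝ (Fin N) => ‖z‖ ^ k :=
    measurable_norm.pow_const k
  have hnn : ∀ z : EuclideanSpace ℝ (Fin N), 0 ≤ ‖z‖ ^ k := fun z =>
    Real.rpow_nonneg (norm_nonneg z) k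
  refine ⟨hmeas.aestronglyMeasurable, ?_⟩
  have hμ : (∫⁻ z in ball (0 : EuclideanSpace ℝ (Fin N)) R, ‖(‖z‖ ^ k)‖ₑ)
      = ∫⁻ z in ball (0 : EuclideanSpace ℝ (Fin N)) R, ENNReal.ofReal (‖z‖ ^ k) :=
    lintegral_enorm_of_nonneg hnn
  rw [HasFiniteIntegral, hμ,
    lintegral_eq_lintegral_meas_le _ (ae_of_all _ hnn) hmeas.aemeasurable]
  have hsN : k⁻¹ * N < -1 := by
    have h1 : k * k⁻¹ = 1 := mul_inv_cancel₀ hk₂.ne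
    nlinarith [h1, hk₁, hk₂]
  calc
    ∫⁻ t in Ioi (0:ℝ), (volume.restrict (ball (0 : EuclideanSpace ℝ (Fin N)) R))
        {a | t ≤ ‖a‖ ^ k}
      ≤ ∫⁻ t in Ioc (0:ℝ) 1 ∪ Ioi 1, (volume.restrict (ball (0 : EuclideanSpace ℝ (Fin N)) R))
        {a | t ≤ ‖a‖ ^ k} := lintegral_mono_set Ioi_subset_Ioc_union_Ioi
    _ ≤ (∫⁻ t in Ioc (0:ℝ) 1, (volume.restrict (ball (0 : EuclideanSpace ℝ (Fin N)) R))
          {a | t ≤ ‖a‖ ^ k}) +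
        ∫⁻ t in Ioi (1:ℝ), (volume.restrict (ball (0 : EuclideanSpace ℝ (Fin N)) R))
          {a | t ≤ ‖a‖ ^ k} := lintegral_union_le _ _ _
    _ < ∞ := by
      refine ENNReal.add_lt_top.2 ⟨?_, ?_⟩
      · calc
          (∫⁻ t in Ioc (0:ℝ) 1, (volume.restrict (ball (0 : EuclideanSpace ℝ (Fin N)) R))
              {a | t ≤ ‖a‖ ^ k})
            ≤ ∫⁻ _ in Ioc (0:ℝ) 1, volume (ball (0 : EuclideanSpace ℝ (Fin N)) R) := by
              refine setLIntegral_mono' measurableSet_Ioc fun t _ => ?_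
              calc (volume.restrict (ball (0 : EuclideanSpace ℝ (Fin N)) R)) {a | t ≤ ‖a‖ ^ k}
                  ≤ (volume.restrict (ball (0 : EuclideanSpace ℝ (Fin N)) R)) univ :=
                    measure_mono (subset_univ _)
                _ = volume (ball (0 : EuclideanSpace ℝ (Fin N)) R) :=
                    Measure.restrict_apply_univ _
          _ < ∞ := by
              rw [setLIntegral_const]
              exact ENNReal.mul_lt_top measure_ball_lt_top (by simp)
      · have hptwise : ∀ t ∈ Ioi (1:ℝ),
            (volume.restrict (ball (0 : EuclideanSpace ℝ (Fin N)) R)) {a | t ≤ ‖a‖ ^ k}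
              ≤ ENNReal.ofReal (t ^ (k⁻¹ * N)) * volume (ball (0 : EuclideanSpace ℝ (Fin N)) 1) := by
          intro t ht
          have ht0 : (0:ℝ) < t := lt_trans one_pos ht
          have hsub : {a : EuclideanSpace ℝ (Fin N) | t ≤ ‖a‖ ^ k}
              ⊆ closedBall 0 (t ^ k⁻¹) := by
            intro a ha
            simp only [mem_setOf_eq] at ha
            rcases eq_or_ne a 0 with rfl | ha0
            · exfalso
              rw [norm_zero, Real.zero_rpow hk₂.ne] at ha
              linarith
            · have hna : 0 < ‖a‖ := norm_pos_iff.2 ha0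
              have : (‖a‖ ^ k) ^ k⁻¹ ≤ t ^ k⁻¹ :=
                Real.rpow_le_rpow_of_nonpos ht0 ha (le_of_lt (inv_neg''.2 hk₂))
              rw [← Real.rpow_mul (norm_nonneg a), mul_inv_cancel₀ hk₂.ne,
                Real.rpow_one] at this
              simpa [mem_closedBall, dist_eq_norm] using this
          calc
            (volume.restrict (ball (0 : EuclideanSpace ℝ (Fin N)) R)) {a | t ≤ ‖a‖ ^ k}
              ≤ volume {a : EuclideanSpace ℝ (Fin N) | t ≤ ‖a‖ ^ k} :=
                Measure.restrict_le_self _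
            _ ≤ volume (closedBall (0 : EuclideanSpace ℝ (Fin N)) (t ^ k⁻¹)) :=
                measure_mono hsub
            _ = ENNReal.ofReal ((t ^ k⁻¹) ^ Module.finrank ℝ (EuclideanSpace ℝ (Fin N))) *
                volume (ball (0 : EuclideanSpace ℝ (Fin N)) 1) :=
                Measure.addHaar_closedBall _ _ (Real.rpow_nonneg ht0.le _)
            _ = ENNReal.ofReal (t ^ (k⁻¹ * N)) * volume (ball (0 : EuclideanSpace ℝ (Fin N)) 1) := by
                rw [← Real.rpow_natCast (t ^ k⁻¹) _, ← Real.rpow_mul ht0.le,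
                  finrank_euclideanSpace_fin]
        calc
          ∫⁻ t in Ioi (1:ℝ), (volume.restrict (ball (0 : EuclideanSpace ℝ (Fin N)) R))
              {a | t ≤ ‖a‖ ^ k}
            ≤ ∫⁻ t in Ioi (1:ℝ), ENNReal.ofReal (t ^ (k⁻¹ * N)) *
                volume (ball (0 : EuclideanSpace ℝ (Fin N)) 1) :=
              setLIntegral_mono' measurableSet_Ioi hptwise
          _ = (∫⁻ t in Ioi (1:ℝ), ENNReal.ofReal (t ^ (k⁻¹ * N))) *
                volume (ball (0 : EuclideanSpace ℝ (Fin N)) 1) :=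
              lintegral_mul_const' _ _ measure_ball_lt_top.ne
          _ < ∞ := ENNReal.mul_lt_top
              ((integrableOn_Ioi_rpow_of_lt hsN one_pos).setLIntegral_lt_top)
              measure_ball_lt_top

lemma riesz_aux_preimage {N : ℕ} (x : EuclideanSpace ℝ (Fin N)) (R : ℝ) :
    (fun y : EuclideanSpace ℝ (Fin N) => x - y) ⁻¹' ball 0 R = ball x R := by
  ext y
  simp [mem_ball, dist_eq_norm, norm_sub_rev]

lemma riesz_aux_trans_integrable {N : ℕ} (hN : 1 ≤ N) {k : ℝ}
    (hk₁ : -(N : ℝ) < k) (hk₂ : k < 0) (x : EuclideanSpace ℝ (Fin N)) (R : ℝ) :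
    IntegrableOn (fun y : EuclideanSpace ℝ (Fin N) => ‖x - y‖ ^ k) (ball x R) volume := by
  have hmp : MeasurePreserving (fun y : EuclideanSpace ℝ (Fin N) => x - y) volume volume :=
    Measure.measurePreserving_sub_left volume x
  have hemb : MeasurableEmbedding (fun y : EuclideanSpace ℝ (Fin N) => x - y) :=
    (MeasurableEquiv.subLeft x).measurableEmbedding
  have h := (hmp.integrableOn_comp_preimage hemb).2
    (riesz_aux_kernel_integrable hN hk₁ hk₂ R)
  rw [riesz_aux_preimage] at h
  exact h

lemma riesz_aux_trans_integral {N : ℕ} (k : ℝ) (x : EuclideanSpace ℝ (Fin N)) (R : ℝ) :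
    ∫ y in ball x R, ‖x - y‖ ^ k = ∫ z in ball (0 : EuclideanSpace ℝ (Fin N)) R, ‖z‖ ^ k := by
  have hmp : MeasurePreserving (fun y : EuclideanSpace ℝ (Fin N) => x - y) volume volume :=
    Measure.measurePreserving_sub_left volume x
  have hemb : MeasurableEmbedding (fun y : EuclideanSpace ℝ (Fin N) => x - y) :=
    (MeasurableEquiv.subLeft x).measurableEmbedding
  have h := hmp.setIntegral_preimage_emb hemb (fun z => ‖z‖ ^ k) (ball 0 R)
  rw [riesz_aux_preimage] at h
  exact h

/-- The Riesz potential of a radially symmetric non-increasing probability density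
vanishes at infinity, and its decay is not faster than `|x|^k`. -/
theorem riesz_potential_decay (N : ℕ) (hN : 1 ≤ N) (k : ℝ)
    (hk₁ : -(N : ℝ) < k) (hk₂ : k < 0)
    (ρ : EuclideanSpace ℝ (Fin N) → ℝ) (hmeas : Measurable ρ)
    (hnn : ∀ᵐ x ∂volume, 0 ≤ ρ x) (hmass : (∫ x, ρ x) = 1)
    (hrad : ∃ f : ℝ → ℝ, (∀ r ∈ Set.Ici (0 : ℝ), 0 ≤ f r) ∧ AntitoneOn f (Set.Ici 0) ∧
      ∀ x, ρ x = f ‖x‖) :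
    Tendsto (fun x : EuclideanSpace ℝ (Fin N) => ∫ y, ‖x - y‖ ^ k * ρ y)
        (Bornology.cobounded _) (nhds 0) ∧
      0 < (∫ y in Metric.ball (0 : EuclideanSpace ℝ (Fin N)) 1, ρ y) ∧
      ∀ x : EuclideanSpace ℝ (Fin N),
        (‖x‖ + 1) ^ k * (∫ y in Metric.ball (0 : EuclideanSpace ℝ (Fin N)) 1, ρ y) ≤
          ∫ y, ‖x - y‖ ^ k * ρ y := by
  obtain ⟨f, hf0, hfa, hfρ⟩ := hrad
  haveI : Nonempty (Fin N) := ⟨⟨0, hN⟩⟩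
  haveI : Nontrivial (EuclideanSpace ℝ (Fin N)) := by
    infer_instance
  clear hnn
  have hnn' : ∀ y : EuclideanSpace ℝ (Fin N), 0 ≤ ρ y := fun y => by
    rw [hfρ y]; exact hf0 _ (norm_nonneg y)
  have hρ_int : Integrable ρ (volume : Measure (EuclideanSpace ℝ (Fin N))) := by
    by_contra h
    rw [integral_undef h] at hmass
    exact one_ne_zero hmass.symm
  have hρ_le : ∀ y : EuclideanSpace ℝ (Fin N), ρ y ≤ f 0 := fun y => by
    rw [hfρ y]
    exact hfa (mem_Ici.2 le_rfl) (mem_Ici.2 (norm_nonneg y)) (norm_nonneg y)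
  -- integrability of the full integrand
  have hint : ∀ x : EuclideanSpace ℝ (Fin N),
      Integrable (fun y => ‖x - y‖ ^ k * ρ y) volume := by
    intro x
    have hms : Measurable fun y : EuclideanSpace ℝ (Fin N) => ‖x - y‖ ^ k * ρ y :=
      ((measurable_const.sub measurable_id).norm.pow_const k).mul hmeas
    have habs : ∀ y : EuclideanSpace ℝ (Fin N), ‖‖x - y‖ ^ k * ρ y‖ = ‖x - y‖ ^ k * ρ y :=
      fun y => by
        rw [Real.norm_eq_abs,
          abs_of_nonneg (mul_nonneg (Real.rpow_nonneg (norm_nonneg _) _) (hnn' y))]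
    have h1 : IntegrableOn (fun y => ‖x - y‖ ^ k * ρ y) (ball x 1) volume := by
      refine Integrable.mono' ((riesz_aux_trans_integrable hN hk₁ hk₂ x 1).const_mul (f 0))
        hms.aestronglyMeasurable.restrict (ae_of_all _ fun y => ?_)
      rw [habs y]
      calc ‖x - y‖ ^ k * ρ y ≤ ‖x - y‖ ^ k * f 0 :=
            mul_le_mul_of_nonneg_left (hρ_le y) (Real.rpow_nonneg (norm_nonneg _) _)
        _ = f 0 * ‖x - y‖ ^ k := mul_comm _ _
    have h2 : IntegrableOn (fun y => ‖x - y‖ ^ k * ρ y) (ball x 1)ᶜ volume := by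
      refine Integrable.mono' hρ_int.restrict
        hms.aestronglyMeasurable.restrict ?_
      filter_upwards [ae_restrict_mem measurableSet_ball.compl] with y hy
      rw [habs y]
      have h1y : (1:ℝ) ≤ ‖x - y‖ := by
        simp only [mem_compl_iff, mem_ball, not_lt, dist_eq_norm] at hy
        calc (1:ℝ) ≤ ‖y - x‖ := hy
          _ = ‖x - y‖ := norm_sub_rev _ _
      calc ‖x - y‖ ^ k * ρ y ≤ 1 * ρ y :=
            mul_le_mul_of_nonneg_right
              (Real.rpow_le_one_of_one_le_of_nonpos h1y hk₂.le) (hnn' y)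
        _ = ρ y := one_mul _
    have h3 := h1.union h2
    rw [union_compl_self] at h3
    exact integrableOn_univ.1 h3
  have hpot_nn : ∀ x : EuclideanSpace ℝ (Fin N), 0 ≤ ∫ y, ‖x - y‖ ^ k * ρ y := fun x =>
    integral_nonneg fun y => mul_nonneg (Real.rpow_nonneg (norm_nonneg _) _) (hnn' y)
  -- Part 2
  have hI_pos : 0 < ∫ y in ball (0 : EuclideanSpace ℝ (Fin N)) 1, ρ y := by
    rcases le_or_gt (f 1) 0 with hf1 | hf1
    · have h1 : f 1 = 0 := le_antisymm hf1 (hf0 1 (mem_Ici.2 zero_le_one))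
      have hzero : EqOn ρ (fun _ => (0:ℝ)) (ball (0 : EuclideanSpace ℝ (Fin N)) 1)ᶜ := by
        intro y hy
        have hy1 : (1:ℝ) ≤ ‖y‖ := by
          simpa [mem_ball_zero_iff, not_lt] using hy
        have hle : ρ y ≤ 0 := by
          rw [hfρ y, ← h1]
          exact hfa (mem_Ici.2 zero_le_one) (mem_Ici.2 (zero_le_one.trans hy1)) hy1
        exact le_antisymm hle (hnn' y)
      have hcompl : ∫ y in (ball (0 : EuclideanSpace ℝ (Fin N)) 1)ᶜ, ρ y = 0 := by
        rw [setIntegral_congr_fun measurableSet_ball.compl hzero]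
        simp
      have hsum := integral_add_compl (measurableSet_ball
        (x := (0 : EuclideanSpace ℝ (Fin N))) (ε := 1)) hρ_int
      rw [hcompl, add_zero, hmass] at hsum
      rw [hsum]; norm_num
    · have hvol : 0 < (volume (ball (0 : EuclideanSpace ℝ (Fin N)) 1)).toReal :=
        ENNReal.toReal_pos (measure_ball_pos volume _ one_pos).ne' measure_ball_lt_top.ne
      calc (0:ℝ) < (volume (ball (0 : EuclideanSpace ℝ (Fin N)) 1)).toReal * f 1 := by
            positivity
        _ = ∫ _ in ball (0 : EuclideanSpace ℝ (Fin N)) 1, f 1 := by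
            rw [setIntegral_const, smul_eq_mul]; rfl
        _ ≤ ∫ y in ball (0 : EuclideanSpace ℝ (Fin N)) 1, ρ y := by
            refine setIntegral_mono_on (integrableOn_const measure_ball_lt_top.ne)
              hρ_int.integrableOn measurableSet_ball fun y hy => ?_
            rw [hfρ y]
            exact hfa (mem_Ici.2 (norm_nonneg y)) (mem_Ici.2 zero_le_one)
              (le_of_lt (mem_ball_zero_iff.1 hy))
  -- Part 3
  have part3 : ∀ x : EuclideanSpace ℝ (Fin N),
      (‖x‖ + 1) ^ k * (∫ y in ball (0 : EuclideanSpace ℝ (Fin N)) 1, ρ y) ≤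
        ∫ y, ‖x - y‖ ^ k * ρ y := by
    intro x
    have hx_ae : ∀ᵐ y : EuclideanSpace ℝ (Fin N) ∂volume, y ≠ x := by
      rw [ae_iff]
      simpa using measure_singleton x
    calc (‖x‖ + 1) ^ k * (∫ y in ball (0 : EuclideanSpace ℝ (Fin N)) 1, ρ y)
        = ∫ y in ball (0 : EuclideanSpace ℝ (Fin N)) 1, (‖x‖ + 1) ^ k * ρ y :=
          (integral_const_mul _ _).symm
      _ ≤ ∫ y in ball (0 : EuclideanSpace ℝ (Fin N)) 1, ‖x - y‖ ^ k * ρ y := by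
          refine setIntegral_mono_ae_restrict (hρ_int.integrableOn.const_mul _)
            (hint x).integrableOn ?_
          filter_upwards [ae_restrict_mem measurableSet_ball, ae_restrict_of_ae hx_ae]
            with y hy hyx
          have hxy_pos : 0 < ‖x - y‖ := by
            rw [norm_pos_iff, sub_ne_zero]
            exact fun h => hyx h.symm
          have hxy_le : ‖x - y‖ ≤ ‖x‖ + 1 := by
            calc ‖x - y‖ ≤ ‖x‖ + ‖y‖ := norm_sub_le _ _
              _ ≤ ‖x‖ + 1 := by
                have := (mem_ball_zero_iff.1 hy).le
                linarith
          exact mul_le_mul_of_nonneg_right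
            (Real.rpow_le_rpow_of_nonpos hxy_pos hxy_le hk₂.le) (hnn' y)
      _ ≤ ∫ y, ‖x - y‖ ^ k * ρ y :=
          setIntegral_le_integral (hint x) (ae_of_all _ fun y =>
            mul_nonneg (Real.rpow_nonneg (norm_nonneg _) _) (hnn' y))
  -- f tends to 0 at infinity
  have hf_small : ∀ ε : ℝ, 0 < ε → ∃ s : ℝ, 0 < s ∧ f s < ε := by
    intro ε hε
    by_contra hcon
    push_neg at hcon
    have hρ_ge : ∀ y : EuclideanSpace ℝ (Fin N), ε ≤ ρ y := by
      intro y
      rw [hfρ y]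
      rcases eq_or_lt_of_le (norm_nonneg y) with h0 | h0
      · calc ε ≤ f 1 := hcon 1 one_pos
          _ ≤ f ‖y‖ := by
            rw [← h0]
            exact hfa (mem_Ici.2 le_rfl) (mem_Ici.2 zero_le_one) zero_le_one
      · exact hcon _ h0
    set v : ℝ := (volume (ball (0 : EuclideanSpace ℝ (Fin N)) 1)).toReal with hv
    have hv_pos : 0 < v :=
      ENNReal.toReal_pos (measure_ball_pos volume _ one_pos).ne' measure_ball_lt_top.ne
    set R : ℝ := max 1 (2 / (ε * v)) with hR
    have hR1 : (1:ℝ) ≤ R := le_max_left _ _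
    have hR0 : (0:ℝ) ≤ R := zero_le_one.trans hR1
    have hRbig : 2 / (ε * v) ≤ R := le_max_right _ _
    have hvolR : (volume (ball (0 : EuclideanSpace ℝ (Fin N)) R)).toReal = R ^ N * v := by
      rw [Measure.addHaar_ball _ _ hR0, finrank_euclideanSpace_fin, ENNReal.toReal_mul,
        ENNReal.toReal_ofReal (pow_nonneg hR0 N)]
    have hle1 : (volume (ball (0 : EuclideanSpace ℝ (Fin N)) R)).toReal * ε ≤ 1 := by
      calc (volume (ball (0 : EuclideanSpace ℝ (Fin N)) R)).toReal * ε
          = ∫ _ in ball (0 : EuclideanSpace ℝ (Fin N)) R, ε := by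
            rw [setIntegral_const, smul_eq_mul]; rfl
        _ ≤ ∫ y in ball (0 : EuclideanSpace ℝ (Fin N)) R, ρ y :=
            setIntegral_mono_on (integrableOn_const measure_ball_lt_top.ne)
              hρ_int.integrableOn measurableSet_ball fun y _ => hρ_ge y
        _ ≤ ∫ y, ρ y := setIntegral_le_integral hρ_int (ae_of_all _ hnn')
        _ = 1 := hmass
    have hRN : R ≤ R ^ N := le_self_pow₀ hR1 (by omega)
    have h2v : 2 / (ε * v) * v * ε = 2 := by
      field_simp
    nlinarith [mul_le_mul_of_nonneg_right (mul_le_mul_of_nonneg_right hRbig hv_pos.le) hε.le,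
      mul_le_mul_of_nonneg_right (mul_le_mul_of_nonneg_right hRN hv_pos.le) hε.le,
      hvolR, hle1]
  have hf_tendsto : Tendsto f atTop (nhds 0) := by
    rw [Metric.tendsto_atTop]
    intro ε hε
    obtain ⟨s, hs0, hsε⟩ := hf_small ε hε
    refine ⟨s, fun t ht => ?_⟩
    rw [Real.dist_eq, sub_zero, abs_of_nonneg (hf0 t (mem_Ici.2 (hs0.le.trans ht)))]
    exact lt_of_le_of_lt (hfa (mem_Ici.2 hs0.le) (mem_Ici.2 (hs0.le.trans ht)) ht) hsε
  -- Part 1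
  refine ⟨?_, hI_pos, part3⟩
  rw [Metric.tendsto_nhds]
  intro ε hε
  have hRex : ∀ᶠ R : ℝ in atTop, R ^ k < ε / 2 := by
    have h := tendsto_rpow_neg_atTop (neg_pos.2 hk₂)
    simp only [neg_neg] at h
    exact h.eventually_lt_const (by linarith)
  obtain ⟨R, hRk, hR1⟩ := (hRex.and (eventually_ge_atTop (1:ℝ))).exists
  have hR0 : (0:ℝ) < R := lt_of_lt_of_le one_pos hR1
  set C : ℝ := ∫ z in ball (0 : EuclideanSpace ℝ (Fin N)) R, ‖z‖ ^ k with hC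
  have hC0 : 0 ≤ C :=
    setIntegral_nonneg measurableSet_ball fun z _ => Real.rpow_nonneg (norm_nonneg _) _
  set δ : ℝ := ε / (2 * (C + 1)) with hδ
  have hδpos : 0 < δ := by positivity
  obtain ⟨S, hS⟩ := (Metric.tendsto_atTop.1 hf_tendsto) δ hδpos
  have hδC : δ * C < ε / 2 := by
    have : δ * C < δ * (C + 1) := by nlinarith
    have h2 : δ * (C + 1) = ε / 2 := by
      rw [hδ]; field_simp
    linarith
  filter_upwards [tendsto_norm_cobounded_atTop.eventually
    (eventually_ge_atTop (max S 0 + R))] with x hx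
  have hxR : max S 0 ≤ ‖x‖ - R := by linarith
  have hxR0 : 0 ≤ ‖x‖ - R := le_trans (le_max_right _ _) hxR
  have hxRS : S ≤ ‖x‖ - R := le_trans (le_max_left _ _) hxR
  have hfx : f (‖x‖ - R) < δ := by
    have := hS (‖x‖ - R) hxRS
    rw [Real.dist_eq, sub_zero, abs_of_nonneg (hf0 _ (mem_Ici.2 hxR0))] at this
    exact this
  rw [Real.dist_0_eq_abs, abs_of_nonneg (hpot_nn x)]
  have hsplit := integral_add_compl (measurableSet_ball (x := x) (ε := R)) (hint x)
  have hA : ∫ y in ball x R, ‖x - y‖ ^ k * ρ y ≤ f (‖x‖ - R) * C := by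
    calc ∫ y in ball x R, ‖x - y‖ ^ k * ρ y
        ≤ ∫ y in ball x R, ‖x - y‖ ^ k * f (‖x‖ - R) := by
          refine setIntegral_mono_on (hint x).integrableOn
            ((riesz_aux_trans_integrable hN hk₁ hk₂ x R).mul_const _)
            measurableSet_ball fun y hy => ?_
          have hxy : ‖x - y‖ < R := by
            rw [mem_ball, dist_eq_norm] at hy
            calc ‖x - y‖ = ‖y - x‖ := norm_sub_rev _ _
              _ < R := hy
          have hylb : ‖x‖ - R ≤ ‖y‖ := by
            have := norm_sub_norm_le x y
            linarith
          refine mul_le_mul_of_nonneg_left ?_ (Real.rpow_nonneg (norm_nonneg _) _)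
          rw [hfρ y]
          exact hfa (mem_Ici.2 hxR0) (mem_Ici.2 (norm_nonneg y)) hylb
      _ = f (‖x‖ - R) * C := by
          rw [integral_mul_const, riesz_aux_trans_integral k x R, mul_comm]
  have hB : ∫ y in (ball x R)ᶜ, ‖x - y‖ ^ k * ρ y ≤ R ^ k := by
    calc ∫ y in (ball x R)ᶜ, ‖x - y‖ ^ k * ρ y
        ≤ ∫ y in (ball x R)ᶜ, R ^ k * ρ y := by
          refine setIntegral_mono_on (hint x).integrableOn
            ((hρ_int.const_mul _).integrableOn) measurableSet_ball.compl fun y hy => ?_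
          have hxy : R ≤ ‖x - y‖ := by
            simp only [mem_compl_iff, mem_ball, not_lt, dist_eq_norm] at hy
            calc R ≤ ‖y - x‖ := hy
              _ = ‖x - y‖ := norm_sub_rev _ _
          exact mul_le_mul_of_nonneg_right
            (Real.rpow_le_rpow_of_nonpos hR0 hxy hk₂.le) (hnn' y)
      _ = R ^ k * ∫ y in (ball x R)ᶜ, ρ y := integral_const_mul _ _
      _ ≤ R ^ k * 1 := by
          refine mul_le_mul_of_nonneg_left ?_ (Real.rpow_nonneg hR0.le _)
          rw [← hmass]
          exact setIntegral_le_integral hρ_int (ae_of_all _ hnn')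
      _ = R ^ k := mul_one _
  have hfC : f (‖x‖ - R) * C ≤ δ * C := mul_le_mul_of_nonneg_right hfx.le hC0
  calc ∫ y, ‖x - y‖ ^ k * ρ y
      = (∫ y in ball x R, ‖x - y‖ ^ k * ρ y) + ∫ y in (ball x R)ᶜ, ‖x - y‖ ^ k * ρ y :=
        hsplit.symm
    _ < ε := by linarith
end
end

section
/- Let N ≥ 2, k ∈ (1−N, 0), and let ρ : ℝ^N → ℝ be measurable with ρ ≥ 0 a.e., ρ ∈ L¹(ℝ^N) ∩ L^∞(ℝ^N) and ∫_{ℝ^N} ρ = 1. Then the mean-field potential S_k(x) := ∫_{ℝ^N} (|x−y|^k / k) ρ(y) dy is a Lipschitz function on ℝ^N; i.e. there exists L < ∞ such that |S_k(x) − S_k(x')| ≤ L |x − x'| for all x, x' ∈ ℝ^N (equivalently, ∇S_k ∈ L^∞(ℝ^N)). -/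
open MeasureTheory Metric Set
open scoped ENNReal NNReal

noncomputable section

/-- Mean value inequality for real powers with negative exponent. -/
lemma mvt_rpow_aux {k : ℝ} (hk : k < 0) {a b : ℝ} (ha : 0 < a) (hb : 0 < b) :
    |a ^ k - b ^ k| ≤ |k| * ((a ^ (k - 1) + b ^ (k - 1)) * |a - b|) := by
  wlog hab : a ≤ b with H
  · rw [abs_sub_comm, abs_sub_comm a b, add_comm]
    exact H hk hb ha (le_of_not_ge hab)
  have hd : ∀ t ∈ Set.Icc a b, HasDerivWithinAt (fun u : ℝ => u ^ k)
      (k * t ^ (k - 1)) (Set.Icc a b) t := fun t ht =>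
    (Real.hasDerivAt_rpow_const (Or.inl (ne_of_gt (lt_of_lt_of_le ha ht.1)))).hasDerivWithinAt
  have hbound : ∀ t ∈ Set.Icc a b, ‖k * t ^ (k - 1)‖ ≤ |k| * a ^ (k - 1) := by
    intro t ht
    rw [norm_mul, Real.norm_eq_abs, Real.norm_eq_abs,
      abs_of_nonneg (Real.rpow_nonneg (ha.le.trans ht.1) _)]
    exact mul_le_mul_of_nonneg_left
      (Real.rpow_le_rpow_of_nonpos ha ht.1 (by linarith)) (abs_nonneg k)
  have key := Convex.norm_image_sub_le_of_norm_hasDerivWithin_le hd hbound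
    (convex_Icc a b) (Set.left_mem_Icc.2 hab) (Set.right_mem_Icc.2 hab)
  rw [Real.norm_eq_abs, Real.norm_eq_abs, abs_sub_comm] at key
  calc |a ^ k - b ^ k| ≤ |k| * a ^ (k - 1) * |b - a| := key
    _ ≤ |k| * ((a ^ (k - 1) + b ^ (k - 1)) * |a - b|) := by
        rw [abs_sub_comm b a, mul_assoc]
        have h0 : (0:ℝ) ≤ b ^ (k - 1) := Real.rpow_nonneg hb.le _
        gcongr
        linarith

lemma measurable_rpow_norm_sub_aux (N : ℕ) (l : ℝ) (x : EuclideanSpace ℝ (Fin N)) :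
    Measurable fun y : EuclideanSpace ℝ (Fin N) => ‖x - y‖ ^ l := by
  have hm1 : Measurable fun t : ℝ => t ^ l :=
    measurable_of_continuousOn_compl_singleton 0 fun t ht =>
      (Real.continuousAt_rpow_const t l (Or.inl ht)).continuousWithinAt
  exact hm1.comp ((measurable_const.sub measurable_id).norm)

/-- `‖z‖ ^ l` is integrable on the unit ball when `-N < l ≤ 0`. -/
lemma ball_rpow_int_aux (N : ℕ) (hN : 1 ≤ N) (l : ℝ) (hl₁ : -(N : ℝ) < l) (hl₂ : l ≤ 0) :
    IntegrableOn (fun z : EuclideanSpace ℝ (Fin N) => ‖z‖ ^ l)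
      (ball (0 : EuclideanSpace ℝ (Fin N)) 1) volume := by
  haveI : Nontrivial (EuclideanSpace ℝ (Fin N)) :=
    Module.nontrivial_of_finrank_pos (R := ℝ)
      (by rw [finrank_euclideanSpace_fin]; omega)
  set E := EuclideanSpace ℝ (Fin N)
  have hmeas : Measurable fun z : EuclideanSpace ℝ (Fin N) => ‖z‖ ^ l := by
    simpa using measurable_rpow_norm_sub_aux N l 0
  refine ⟨hmeas.aestronglyMeasurable, ?_⟩
  rw [hasFiniteIntegral_iff_ofReal
    (Filter.Eventually.of_forall fun z => Real.rpow_nonneg (norm_nonneg _) _)]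
  set S : ℕ → Set E := fun n =>
    ball 0 ((2 : ℝ) ^ (-(n : ℝ))) \ ball 0 ((2 : ℝ) ^ (-(n : ℝ) - 1)) with hS
  have hsub : ball (0 : EuclideanSpace ℝ (Fin N)) 1 ⊆ {0} ∪ ⋃ n, S n := by
    intro z hz
    rcases eq_or_ne z 0 with rfl | hz0
    · exact Or.inl rfl
    refine Or.inr (mem_iUnion.2 ?_)
    have hz1 : ‖z‖ < 1 := by rwa [mem_ball_zero_iff] at hz
    have hz0' : 0 < ‖z‖ := norm_pos_iff.2 hz0
    have hP : ∃ n : ℕ, (2 : ℝ) ^ (-(n : ℝ) - 1) ≤ ‖z‖ := by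
      obtain ⟨n, hn⟩ := exists_pow_lt_of_lt_one hz0' (by norm_num : (1:ℝ)/2 < 1)
      refine ⟨n, le_of_lt (lt_of_le_of_lt ?_ hn)⟩
      have he : (2 : ℝ) ^ (-(n : ℝ) - 1) = ((1:ℝ)/2) ^ (n + 1) := by
        rw [one_div, inv_pow, ← Real.rpow_natCast (2:ℝ) (n+1),
          ← Real.rpow_neg (by norm_num : (0:ℝ) ≤ 2)]
        congr 1; push_cast; ring
      rw [he, pow_succ]
      nlinarith [pow_pos (by norm_num : (0:ℝ) < 1/2) n,
        pow_nonneg (by norm_num : (0:ℝ) ≤ 1/2) n]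
    classical
    refine ⟨Nat.find hP, ?_, ?_⟩
    · rw [mem_ball_zero_iff]
      rcases Nat.eq_zero_or_pos (Nat.find hP) with h0 | hpos
      · rw [h0]; simpa using hz1
      · obtain ⟨m, hm⟩ := Nat.exists_eq_succ_of_ne_zero hpos.ne'
        have hmin := Nat.find_min hP (m := m) (by omega)
        push_neg at hmin
        rw [hm]
        convert hmin using 2
        exacts [rfl, by push_cast; ring]
    · rw [mem_ball_zero_iff, not_lt]
      exact Nat.find_spec hP
  have key : ∀ n : ℕ, ∫⁻ z in S n, ENNReal.ofReal (‖z‖ ^ l) ∂volume ≤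
      (ENNReal.ofReal ((2:ℝ) ^ (-l)) * volume (ball (0 : EuclideanSpace ℝ (Fin N)) 1)) *
        (ENNReal.ofReal ((2:ℝ) ^ (-(l + N)))) ^ n := by
    intro n
    have hrpos : (0:ℝ) < (2 : ℝ) ^ (-(n : ℝ) - 1) := Real.rpow_pos_of_pos (by norm_num) _
    have hbd : ∀ z ∈ S n, ENNReal.ofReal (‖z‖ ^ l) ≤
        ENNReal.ofReal (((2:ℝ) ^ (-(n : ℝ) - 1)) ^ l) := by
      intro z hz
      apply ENNReal.ofReal_le_ofReal
      apply Real.rpow_le_rpow_of_nonpos hrpos _ hl₂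
      rw [hS] at hz
      simpa [mem_ball_zero_iff, not_lt] using hz.2
    have hreal : ((2:ℝ) ^ (-(n:ℝ) - 1)) ^ l * ((2:ℝ) ^ (-(n:ℝ))) ^ (N:ℕ) =
        (2:ℝ) ^ (-l) * ((2:ℝ) ^ (-(l + (N:ℝ)))) ^ (n:ℕ) := by
      rw [← Real.rpow_natCast ((2:ℝ) ^ (-(n:ℝ))) N,
        ← Real.rpow_natCast ((2:ℝ) ^ (-(l + (N:ℝ)))) n,
        ← Real.rpow_mul (by norm_num : (0:ℝ) ≤ 2),
        ← Real.rpow_mul (by norm_num : (0:ℝ) ≤ 2),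
        ← Real.rpow_mul (by norm_num : (0:ℝ) ≤ 2),
        ← Real.rpow_add (by norm_num : (0:ℝ) < 2),
        ← Real.rpow_add (by norm_num : (0:ℝ) < 2)]
      congr 1; ring
    calc ∫⁻ z in S n, ENNReal.ofReal (‖z‖ ^ l) ∂volume
        ≤ ∫⁻ _ in S n, ENNReal.ofReal (((2:ℝ) ^ (-(n : ℝ) - 1)) ^ l) ∂volume :=
          setLIntegral_mono measurable_const (fun z hz => hbd z hz)
      _ = ENNReal.ofReal (((2:ℝ) ^ (-(n : ℝ) - 1)) ^ l) * volume (S n) := by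
          rw [setLIntegral_const]
      _ ≤ ENNReal.ofReal (((2:ℝ) ^ (-(n : ℝ) - 1)) ^ l) *
            (ENNReal.ofReal (((2:ℝ) ^ (-(n : ℝ))) ^ (Module.finrank ℝ E)) *
              volume (ball (0 : EuclideanSpace ℝ (Fin N)) 1)) := by
          gcongr
          rw [hS]
          refine le_trans (measure_mono diff_subset) ?_
          rw [Measure.addHaar_ball volume _ (le_of_lt (Real.rpow_pos_of_pos (by norm_num) _))]
      _ = (ENNReal.ofReal ((2:ℝ) ^ (-l)) * volume (ball (0 : EuclideanSpace ℝ (Fin N)) 1)) *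
            (ENNReal.ofReal ((2:ℝ) ^ (-(l + N)))) ^ n := by
          rw [show Module.finrank ℝ E = N from finrank_euclideanSpace_fin,
            ← ENNReal.ofReal_pow (by positivity), ← mul_assoc,
            ← ENNReal.ofReal_mul (by positivity), hreal,
            ENNReal.ofReal_mul (by positivity), ENNReal.ofReal_pow (by positivity)]
          ring
  calc ∫⁻ z in ball (0 : EuclideanSpace ℝ (Fin N)) 1, ENNReal.ofReal (‖z‖ ^ l) ∂volume
      ≤ ∫⁻ z in ({0} ∪ ⋃ n, S n : Set E), ENNReal.ofReal (‖z‖ ^ l) ∂volume :=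
        lintegral_mono_set hsub
    _ ≤ (∫⁻ z in ({0} : Set E), ENNReal.ofReal (‖z‖ ^ l) ∂volume) +
        ∫⁻ z in (⋃ n, S n), ENNReal.ofReal (‖z‖ ^ l) ∂volume :=
        lintegral_union_le _ _ _
    _ ≤ 0 + ∑' n, ∫⁻ z in S n, ENNReal.ofReal (‖z‖ ^ l) ∂volume := by
        gcongr
        · rw [setLIntegral_measure_zero _ _ (measure_singleton 0)]
        · exact lintegral_iUnion_le _ _
    _ ≤ 0 + ∑' n : ℕ, (ENNReal.ofReal ((2:ℝ) ^ (-l)) * volume (ball (0 : EuclideanSpace ℝ (Fin N)) 1)) *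
          (ENNReal.ofReal ((2:ℝ) ^ (-(l + N)))) ^ n := by
        gcongr
        exact key _
    _ < ⊤ := by
        rw [zero_add, ENNReal.tsum_mul_left, ENNReal.tsum_geometric]
        have hr : ENNReal.ofReal ((2:ℝ) ^ (-(l + N))) < 1 := by
          rw [← ENNReal.ofReal_one]
          apply ENNReal.ofReal_lt_ofReal_iff_of_nonneg (by positivity) |>.2
          exact Real.rpow_lt_one_of_one_lt_of_neg (by norm_num) (by linarith)
        apply ENNReal.mul_lt_top
        · exact ENNReal.mul_lt_top ENNReal.ofReal_lt_top measure_ball_lt_top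
        · exact ENNReal.inv_lt_top.2 (tsub_pos_of_lt hr)

/-- Integrability and a uniform bound on the convolution `∫ ‖x-y‖^l ρ(y) dy`. -/
lemma conv_bound_aux (N : ℕ) (hN : 1 ≤ N) (l : ℝ) (hl₁ : -(N : ℝ) < l) (hl₂ : l ≤ 0)
    (ρ : EuclideanSpace ℝ (Fin N) → ℝ) (hmeas : Measurable ρ)
    (hnn : ∀ᵐ y ∂volume, 0 ≤ ρ y) (hint : Integrable ρ)
    (M : ℝ) (hM : ∀ᵐ y ∂volume, ρ y ≤ M) (x : EuclideanSpace ℝ (Fin N)) :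
    Integrable (fun y => ‖x - y‖ ^ l * ρ y) ∧
    ∫ y, ‖x - y‖ ^ l * ρ y ≤
      M * (∫ z in ball (0 : EuclideanSpace ℝ (Fin N)) 1, ‖z‖ ^ l) + ∫ y, ρ y := by
  have h0 := ball_rpow_int_aux N hN l hl₁ hl₂
  have hmp : MeasurePreserving (fun y : EuclideanSpace ℝ (Fin N) => x - y) volume volume :=
    Measure.measurePreserving_sub_left volume x
  have hemb : MeasurableEmbedding (fun y : EuclideanSpace ℝ (Fin N) => x - y) :=
    (Homeomorph.subLeft x).measurableEmbedding
  have hpre : (fun y : EuclideanSpace ℝ (Fin N) => x - y) ⁻¹' (ball 0 1) = ball x 1 := by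
    ext y; simp [mem_ball, dist_eq_norm, norm_sub_rev]
  have hball : IntegrableOn (fun y : EuclideanSpace ℝ (Fin N) => ‖x - y‖ ^ l) (ball x 1) volume := by
    have := (hmp.integrableOn_comp_preimage hemb).2 h0
    rwa [hpre] at this
  have hIeq : ∫ y in ball x 1, ‖x - y‖ ^ l = ∫ z in ball (0 : EuclideanSpace ℝ (Fin N)) 1, ‖z‖ ^ l := by
    have := hmp.setIntegral_preimage_emb hemb (fun z => ‖z‖ ^ l) (ball 0 1)
    rwa [hpre] at this
  set f : EuclideanSpace ℝ (Fin N) → ℝ := fun y => ‖x - y‖ ^ l * ρ y with hf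
  have fmeas : Measurable f := (measurable_rpow_norm_sub_aux N l x).mul hmeas
  have int_s : IntegrableOn f (ball x 1) volume := by
    refine Integrable.mono' (hball.const_mul M) fmeas.aestronglyMeasurable.restrict ?_
    filter_upwards [ae_restrict_of_ae hM, ae_restrict_of_ae hnn] with y h1 h2
    rw [hf, Real.norm_eq_abs, abs_mul,
      abs_of_nonneg (Real.rpow_nonneg (norm_nonneg _) _), abs_of_nonneg h2, mul_comm M]
    exact mul_le_mul_of_nonneg_left h1 (Real.rpow_nonneg (norm_nonneg _) _)
  have int_c : IntegrableOn f (ball x 1)ᶜ volume := by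
    refine Integrable.mono' hint.integrableOn fmeas.aestronglyMeasurable.restrict ?_
    filter_upwards [ae_restrict_of_ae hnn, ae_restrict_mem measurableSet_ball.compl]
      with y h2 hyc
    have h1le : ‖x - y‖ ^ l ≤ 1 := by
      apply Real.rpow_le_one_of_one_le_of_nonpos _ hl₂
      have : ¬ dist y x < 1 := hyc
      rw [dist_eq_norm, norm_sub_rev] at this
      linarith [not_lt.1 this]
    rw [hf, Real.norm_eq_abs, abs_mul,
      abs_of_nonneg (Real.rpow_nonneg (norm_nonneg _) _), abs_of_nonneg h2]
    nlinarith [Real.rpow_nonneg (norm_nonneg (x - y)) l]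
  have hInt : Integrable f := by
    rw [← integrableOn_univ, ← union_compl_self (ball x 1)]
    exact int_s.union int_c
  refine ⟨hInt, ?_⟩
  rw [← integral_add_compl measurableSet_ball hInt]
  refine add_le_add ?_ ?_
  · calc ∫ y in ball x 1, f y ≤ ∫ y in ball x 1, M * ‖x - y‖ ^ l := by
          refine setIntegral_mono_ae_restrict int_s (hball.const_mul M) ?_
          filter_upwards [ae_restrict_of_ae hM, ae_restrict_of_ae hnn] with y h1 h2
          rw [hf]
          calc ‖x - y‖ ^ l * ρ y ≤ ‖x - y‖ ^ l * M :=
                mul_le_mul_of_nonneg_left h1 (Real.rpow_nonneg (norm_nonneg _) _)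
            _ = M * ‖x - y‖ ^ l := mul_comm _ _
      _ = M * ∫ y in ball x 1, ‖x - y‖ ^ l := integral_const_mul _ _
      _ = M * ∫ z in ball (0 : EuclideanSpace ℝ (Fin N)) 1, ‖z‖ ^ l := by rw [hIeq]
  · calc ∫ y in (ball x 1)ᶜ, f y ≤ ∫ y in (ball x 1)ᶜ, ρ y := by
          refine setIntegral_mono_ae_restrict int_c hint.integrableOn ?_
          filter_upwards [ae_restrict_of_ae hnn, ae_restrict_mem measurableSet_ball.compl]
            with y h2 hyc
          have h1le : ‖x - y‖ ^ l ≤ 1 := by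
            apply Real.rpow_le_one_of_one_le_of_nonpos _ hl₂
            have : ¬ dist y x < 1 := hyc
            rw [dist_eq_norm, norm_sub_rev] at this
            linarith [not_lt.1 this]
          have hmm := mul_le_mul_of_nonneg_right h1le h2
          rw [one_mul] at hmm
          exact hmm
      _ ≤ ∫ y, ρ y := setIntegral_le_integral hint hnn

/-- For `k ∈ (1-N, 0)`, the mean-field potential `S_k = W_k ∗ ρ` of a bounded
probability density is Lipschitz on `ℝ^N`. -/
theorem potential_lipschitz (N : ℕ) (hN : 2 ≤ N) (k : ℝ)
    (hk₁ : 1 - (N : ℝ) < k) (hk₂ : k < 0)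
    (ρ : EuclideanSpace ℝ (Fin N) → ℝ) (hmeas : Measurable ρ)
    (hnn : ∀ᵐ x ∂volume, 0 ≤ ρ x) (hint : Integrable ρ)
    (hbdd : MemLp ρ ⊤) (hmass : (∫ x, ρ x) = 1) :
    ∃ L : ℝ, ∀ x x' : EuclideanSpace ℝ (Fin N),
      |(∫ y, ‖x - y‖ ^ k / k * ρ y) - ∫ y, ‖x' - y‖ ^ k / k * ρ y| ≤ L * ‖x - x'‖ := by
  haveI : Nontrivial (EuclideanSpace ℝ (Fin N)) :=
    Module.nontrivial_of_finrank_pos (R := ℝ)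
      (by rw [finrank_euclideanSpace_fin]; omega)
  have hN1 : 1 ≤ N := by omega
  have hNk : -(N : ℝ) < k := by
    have : (1:ℝ) - N > -(N:ℝ) := by linarith
    linarith
  have hNk1 : -(N : ℝ) < k - 1 := by linarith
  -- essential supremum bound
  set M : ℝ := (eLpNormEssSup ρ volume).toReal with hMdef
  have hMfin : eLpNormEssSup ρ volume < ⊤ := by
    have := hbdd.2
    rwa [eLpNorm_exponent_top] at this
  have hM : ∀ᵐ y ∂(volume : Measure (EuclideanSpace ℝ (Fin N))), ρ y ≤ M := by
    filter_upwards [ae_le_eLpNormEssSup (f := ρ) (μ := volume)] with y hy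
    have h1 : (‖ρ y‖₊ : ℝ≥0∞).toReal ≤ M :=
      ENNReal.toReal_mono hMfin.ne hy
    calc ρ y ≤ |ρ y| := le_abs_self _
      _ = (‖ρ y‖₊ : ℝ≥0∞).toReal := by simp [Real.norm_eq_abs]
      _ ≤ M := h1
  -- the two convolution bounds
  set I₁ : ℝ := ∫ z in ball (0 : EuclideanSpace ℝ (Fin N)) 1, ‖z‖ ^ (k - 1) with hI₁
  set A : ℝ := M * I₁ + 1 with hA
  refine ⟨2 * A, fun x x' => ?_⟩
  have c1 := conv_bound_aux N hN1 (k - 1) hNk1 (by linarith) ρ hmeas hnn hint M hM x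
  have c2 := conv_bound_aux N hN1 (k - 1) hNk1 (by linarith) ρ hmeas hnn hint M hM x'
  have ck1 := conv_bound_aux N hN1 k hNk (le_of_lt hk₂) ρ hmeas hnn hint M hM x
  have ck2 := conv_bound_aux N hN1 k hNk (le_of_lt hk₂) ρ hmeas hnn hint M hM x'
  -- integrability of the potentials
  have hg : Integrable (fun y : EuclideanSpace ℝ (Fin N) => ‖x - y‖ ^ k / k * ρ y) := by
    have : (fun y : EuclideanSpace ℝ (Fin N) => ‖x - y‖ ^ k / k * ρ y)
        = fun y : EuclideanSpace ℝ (Fin N) => (1 / k) * (‖x - y‖ ^ k * ρ y) := by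
      ext y; ring
    rw [this]
    exact ck1.1.const_mul _
  have hg' : Integrable (fun y : EuclideanSpace ℝ (Fin N) => ‖x' - y‖ ^ k / k * ρ y) := by
    have : (fun y : EuclideanSpace ℝ (Fin N) => ‖x' - y‖ ^ k / k * ρ y)
        = fun y : EuclideanSpace ℝ (Fin N) => (1 / k) * (‖x' - y‖ ^ k * ρ y) := by
      ext y; ring
    rw [this]
    exact ck2.1.const_mul _
  have hb1 : ∫ y, ‖x - y‖ ^ (k - 1) * ρ y ≤ A := by
    have h := c1.2; rw [hmass] at h; exact h
  have hb2 : ∫ y, ‖x' - y‖ ^ (k - 1) * ρ y ≤ A := by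
    have h := c2.2; rw [hmass] at h; exact h
  -- pointwise a.e. bound
  have hx : ∀ᵐ y ∂(volume : Measure (EuclideanSpace ℝ (Fin N))), y ≠ x := by
    rw [ae_iff]
    have : {y : EuclideanSpace ℝ (Fin N) | ¬ y ≠ x} = {x} := by ext y; simp
    rw [this, measure_singleton]
  have hx' : ∀ᵐ y ∂(volume : Measure (EuclideanSpace ℝ (Fin N))), y ≠ x' := by
    rw [ae_iff]
    have : {y : EuclideanSpace ℝ (Fin N) | ¬ y ≠ x'} = {x'} := by ext y; simp
    rw [this, measure_singleton]
  have hae : ∀ᵐ y ∂(volume : Measure (EuclideanSpace ℝ (Fin N))),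
      |‖x - y‖ ^ k / k * ρ y - ‖x' - y‖ ^ k / k * ρ y| ≤
        ‖x - x'‖ * (‖x - y‖ ^ (k - 1) * ρ y + ‖x' - y‖ ^ (k - 1) * ρ y) := by
    filter_upwards [hnn, hx, hx'] with y hρ hyx hyx'
    set a := ‖x - y‖ with hadef
    set b := ‖x' - y‖ with hbdef
    have ha : 0 < a := norm_pos_iff.2 (sub_ne_zero.2 (Ne.symm hyx))
    have hb : 0 < b := norm_pos_iff.2 (sub_ne_zero.2 (Ne.symm hyx'))
    have habs : |a - b| ≤ ‖x - x'‖ := by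
      have h := abs_norm_sub_norm_le (x - y) (x' - y)
      have he : (x - y) - (x' - y) = x - x' := by abel
      rwa [he] at h
    have h1 : |a ^ k / k * ρ y - b ^ k / k * ρ y| = |a ^ k - b ^ k| / |k| * ρ y := by
      have he : a ^ k / k * ρ y - b ^ k / k * ρ y = (a ^ k - b ^ k) / k * ρ y := by ring
      rw [he, abs_mul, abs_div, abs_of_nonneg hρ]
    have h2 : |a ^ k - b ^ k| / |k| ≤ (a ^ (k - 1) + b ^ (k - 1)) * ‖x - x'‖ := by
      rw [div_le_iff₀ (abs_pos.2 (ne_of_lt hk₂))]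
      calc |a ^ k - b ^ k| ≤ |k| * ((a ^ (k - 1) + b ^ (k - 1)) * |a - b|) :=
            mvt_rpow_aux hk₂ ha hb
        _ ≤ |k| * ((a ^ (k - 1) + b ^ (k - 1)) * ‖x - x'‖) := by
            gcongr
        _ = (a ^ (k - 1) + b ^ (k - 1)) * ‖x - x'‖ * |k| := by ring
    calc |a ^ k / k * ρ y - b ^ k / k * ρ y|
        = |a ^ k - b ^ k| / |k| * ρ y := h1
      _ ≤ ((a ^ (k - 1) + b ^ (k - 1)) * ‖x - x'‖) * ρ y :=
          mul_le_mul_of_nonneg_right h2 hρ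
      _ = ‖x - x'‖ * (a ^ (k - 1) * ρ y + b ^ (k - 1) * ρ y) := by ring
  -- assemble
  calc |(∫ y, ‖x - y‖ ^ k / k * ρ y) - ∫ y, ‖x' - y‖ ^ k / k * ρ y|
      = |∫ y, (‖x - y‖ ^ k / k * ρ y - ‖x' - y‖ ^ k / k * ρ y)| := by
        rw [integral_sub hg hg']
    _ ≤ ∫ y, |‖x - y‖ ^ k / k * ρ y - ‖x' - y‖ ^ k / k * ρ y| := by
        simpa [Real.norm_eq_abs] using
          norm_integral_le_integral_norm
            (fun y : EuclideanSpace ℝ (Fin N) => ‖x - y‖ ^ k / k * ρ y - ‖x' - y‖ ^ k / k * ρ y)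
    _ ≤ ∫ y, ‖x - x'‖ * (‖x - y‖ ^ (k - 1) * ρ y + ‖x' - y‖ ^ (k - 1) * ρ y) := by
        refine integral_mono_ae ((hg.sub hg').abs) ?_ hae
        exact (c1.1.add c2.1).const_mul _
    _ = ‖x - x'‖ * ((∫ y, ‖x - y‖ ^ (k - 1) * ρ y) + ∫ y, ‖x' - y‖ ^ (k - 1) * ρ y) := by
        rw [integral_const_mul, integral_add c1.1 c2.1]
    _ ≤ ‖x - x'‖ * (A + A) :=
        mul_le_mul_of_nonneg_left (add_le_add hb1 hb2) (norm_nonneg _)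
    _ = 2 * A * ‖x - x'‖ := by ring
end
end

section
/- Let T : ℝ → ℝ be non-decreasing and let g : ℝ → [0, ∞) be a measurable function such that T is differentiable at almost every x ∈ ℝ with derivative T'(x) = g(x). Let 𝒦 : [0, ∞) → ℝ be continuous, non-decreasing and concave on [0, ∞). Then for all real a < b, 𝒦( (T(b) − T(a)) / (b − a) ) ≥ ∫_0^1 𝒦( g((1−s)a + s b) ) ds. -/
open MeasureTheory

noncomputable section

/-- Jensen-type inequality for monotone transport maps: if `T` is non-decreasing with
a.e. derivative `g ≥ 0` and `𝒦` is continuous, non-decreasing and concave on `[0,∞)`,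
then `𝒦((T(b)-T(a))/(b-a)) ≥ ∫₀¹ 𝒦(g((1-s)a+sb)) ds` for all `a < b`. -/
theorem jensen_transport (T : ℝ → ℝ) (hT : Monotone T)
    (g : ℝ → ℝ) (hg : Measurable g) (hg0 : ∀ x, 0 ≤ g x)
    (hderiv : ∀ᵐ x ∂volume, HasDerivAt T (g x) x)
    (𝒦 : ℝ → ℝ) (h𝒦c : ContinuousOn 𝒦 (Set.Ici 0))
    (h𝒦m : MonotoneOn 𝒦 (Set.Ici 0)) (h𝒦cc : ConcaveOn ℝ (Set.Ici 0) 𝒦) :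
    ∀ a b : ℝ, a < b →
      (∫ s in (0:ℝ)..1, 𝒦 (g ((1 - s) * a + s * b))) ≤
        𝒦 ((T b - T a) / (b - a)) := by
  intro a b hab
  have hba : (0:ℝ) < b - a := sub_pos.2 hab
  have hTab : (0:ℝ) ≤ T b - T a := sub_nonneg.2 (hT hab.le)
  set f := hT.stieltjesFunction with hf
  -- a.e. equality of g with the RN derivative
  have hae : ∀ᵐ x ∂volume, g x = (f.measure.rnDeriv volume x).toReal := by
    filter_upwards [hderiv, hT.ae_hasDerivAt] with x h1 h2 using h1.unique h2
  -- the key lintegral bound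
  have hIoo : (Set.Ioo a b : Set ℝ) =ᵐ[volume] Set.Ioc a b := Ioo_ae_eq_Ioc
  have hlint : ∫⁻ x in Set.Ioc a b, ENNReal.ofReal (g x) ∂volume
      ≤ ENNReal.ofReal (T b - T a) := by
    rw [← setLIntegral_congr hIoo]
    have hfb : Function.leftLim f b ≤ T b := by
      refine le_of_tendsto (f.mono.tendsto_leftLim b) ?_
      filter_upwards [self_mem_nhdsWithin] with x (hx : x < b)
      rw [hT.stieltjesFunction_eq]
      exact hT.rightLim_le hx
    have hfa : T a ≤ f a := by
      rw [hT.stieltjesFunction_eq]; exact hT.le_rightLim le_rfl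
    calc ∫⁻ x in Set.Ioo a b, ENNReal.ofReal (g x) ∂volume
        = ∫⁻ x in Set.Ioo a b,
            ENNReal.ofReal ((f.measure.rnDeriv volume x).toReal) ∂volume :=
          lintegral_congr_ae ((ae_restrict_of_ae hae).mono fun x hx =>
            congrArg ENNReal.ofReal hx)
      _ ≤ ∫⁻ x in Set.Ioo a b, f.measure.rnDeriv volume x ∂volume :=
          lintegral_mono fun x => ENNReal.ofReal_toReal_le
      _ ≤ f.measure (Set.Ioo a b) := Measure.setLIntegral_rnDeriv_le _
      _ = ENNReal.ofReal (Function.leftLim f b - f a) := f.measure_Ioo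
      _ ≤ ENNReal.ofReal (T b - T a) :=
          ENNReal.ofReal_le_ofReal (by linarith)
  -- integrability of g on `Ioc a b`
  have hgint : IntegrableOn g (Set.Ioc a b) volume := by
    refine ⟨hg.aestronglyMeasurable.restrict, ?_⟩
    rw [hasFiniteIntegral_iff_ofReal (ae_of_all _ hg0)]
    exact hlint.trans_lt ENNReal.ofReal_lt_top
  -- the set integral bound
  have hint_le : ∫ x in Set.Ioc a b, g x ∂volume ≤ T b - T a := by
    rw [integral_eq_lintegral_of_nonneg_ae (ae_of_all _ hg0)
      hg.aestronglyMeasurable.restrict]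
    exact ENNReal.toReal_le_of_le_ofReal hTab hlint
  -- measurability/integrability of `𝒦 ∘ g`
  have h𝒦' : Continuous fun t : ℝ => 𝒦 (max t 0) := by
    exact h𝒦c.comp_continuous (continuous_id.max continuous_const)
      fun x => Set.mem_Ici.mpr (le_max_right _ _)
  have hKg_meas : Measurable fun x => 𝒦 (g x) := by
    have : (fun x => 𝒦 (g x)) = fun x => 𝒦 (max (g x) 0) := by
      funext x; rw [max_eq_left (hg0 x)]
    rw [this]
    exact h𝒦'.measurable.comp hg
  -- pointwise bound on 𝒦 on [0, ∞)
  have hKbound : ∀ t : ℝ, 0 ≤ t → |𝒦 t| ≤ |𝒦 0| + |𝒦 1| + |𝒦 1 - 𝒦 0| * t := by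
    intro t ht
    have h0 : (0:ℝ) ∈ Set.Ici (0:ℝ) := Set.mem_Ici.mpr le_rfl
    have h1 : (1:ℝ) ∈ Set.Ici (0:ℝ) := Set.mem_Ici.mpr zero_le_one
    have hti : t ∈ Set.Ici (0:ℝ) := Set.mem_Ici.mpr ht
    have hlow : 𝒦 0 ≤ 𝒦 t := h𝒦m h0 hti ht
    have hupper : 𝒦 t ≤ |𝒦 0| + |𝒦 1| + |𝒦 1 - 𝒦 0| * t := by
      rcases le_total t 1 with h | h
      · have : 𝒦 t ≤ 𝒦 1 := h𝒦m hti h1 h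
        have := abs_nonneg (𝒦 1 - 𝒦 0)
        nlinarith [le_abs_self (𝒦 1), abs_nonneg (𝒦 0), mul_nonneg (abs_nonneg (𝒦 1 - 𝒦 0)) ht]
      · -- t ≥ 1 : use concavity, 1 = (1 - 1/t)*0 + (1/t)*t
        have htpos : (0:ℝ) < t := lt_of_lt_of_le one_pos h
        have hc1 : (0:ℝ) ≤ 1 - 1/t := by
          have : 1/t ≤ 1 := by rw [div_le_one htpos]; exact h
          linarith
        have hc2 : (0:ℝ) ≤ 1/t := by positivity
        have hc3 : (1 - 1/t) + 1/t = 1 := by ring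
        have hcomb := h𝒦cc.2 h0 hti hc1 hc2 hc3
        rw [smul_eq_mul, smul_eq_mul, smul_eq_mul, smul_eq_mul, mul_zero, zero_add,
          one_div_mul_cancel htpos.ne'] at hcomb
        have hKt : 𝒦 t ≤ 𝒦 0 + t * (𝒦 1 - 𝒦 0) := by
          have hmul := mul_le_mul_of_nonneg_left hcomb htpos.le
          have ht1 : t * (1/t) = 1 := mul_one_div_cancel htpos.ne'
          nlinarith [hmul, ht1]
        have : t * (𝒦 1 - 𝒦 0) ≤ |𝒦 1 - 𝒦 0| * t := by
          rw [mul_comm]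
          exact mul_le_mul_of_nonneg_right (le_abs_self _) htpos.le
        nlinarith [le_abs_self (𝒦 0), abs_nonneg (𝒦 1)]
    rw [abs_le]
    constructor
    · have : -(|𝒦 0| + |𝒦 1| + |𝒦 1 - 𝒦 0| * t) ≤ -|𝒦 0| := by
        nlinarith [abs_nonneg (𝒦 1), mul_nonneg (abs_nonneg (𝒦 1 - 𝒦 0)) ht]
      calc -(|𝒦 0| + |𝒦 1| + |𝒦 1 - 𝒦 0| * t) ≤ -|𝒦 0| := this
        _ ≤ 𝒦 0 := neg_abs_le _
        _ ≤ 𝒦 t := hlow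
    · exact hupper
  have hKgint : IntegrableOn (fun x => 𝒦 (g x)) (Set.Ioc a b) volume := by
    have hbnd : Integrable (fun x => |𝒦 0| + |𝒦 1| + |𝒦 1 - 𝒦 0| * g x)
        (volume.restrict (Set.Ioc a b)) := by
      refine Integrable.add (integrable_const _) ?_
      exact hgint.const_mul _
    refine hbnd.mono' hKg_meas.aestronglyMeasurable.restrict ?_
    refine ae_of_all _ fun x => ?_
    rw [Real.norm_eq_abs]
    exact hKbound (g x) (hg0 x)
  -- change of variables: reduce to the average over `Ioc a b`
  have hchg : (∫ s in (0:ℝ)..1, 𝒦 (g ((1 - s) * a + s * b)))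
      = (b - a)⁻¹ * ∫ x in Set.Ioc a b, 𝒦 (g x) ∂volume := by
    have h1 : (fun s : ℝ => 𝒦 (g ((1 - s) * a + s * b)))
        = fun s : ℝ => 𝒦 (g (a + (b - a) * s)) := by
      funext s; ring_nf
    rw [h1, intervalIntegral.integral_comp_add_mul (fun x => 𝒦 (g x)) hba.ne' a]
    rw [mul_zero, add_zero, mul_one]
    have : a + (b - a) = b := by ring
    rw [this, intervalIntegral.integral_of_le hab.le]
    simp [smul_eq_mul]
  rw [hchg]
  -- Jensen's inequality
  have h0 : volume (Set.Ioc a b) ≠ 0 := by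
    rw [Real.volume_Ioc]
    simp only [ne_eq, ENNReal.ofReal_eq_zero, not_le]
    linarith
  have hfin : volume (Set.Ioc a b) ≠ ⊤ := by
    rw [Real.volume_Ioc]; exact ENNReal.ofReal_ne_top
  have hjensen := h𝒦cc.le_map_set_average h𝒦c isClosed_Ici h0 hfin
    (ae_of_all _ fun x => hg0 x) hgint hKgint
  rw [setAverage_eq, setAverage_eq, Real.volume_real_Ioc_of_le hab.le,
    smul_eq_mul, smul_eq_mul] at hjensen
  refine hjensen.trans ?_
  have havg_mem : (b - a)⁻¹ * ∫ x in Set.Ioc a b, g x ∂volume ∈ Set.Ici (0:ℝ) := by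
    have h' : 0 ≤ ∫ x in Set.Ioc a b, g x ∂volume :=
      integral_nonneg fun x => hg0 x
    exact Set.mem_Ici.mpr (by positivity)
  have htarget_mem : (T b - T a) / (b - a) ∈ Set.Ici (0:ℝ) :=
    Set.mem_Ici.mpr (div_nonneg hTab hba.le)
  refine h𝒦m havg_mem htarget_mem ?_
  rw [div_eq_inv_mul]
  exact mul_le_mul_of_nonneg_left hint_le (inv_nonneg.2 hba.le)
end
end
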